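/- arXiv:2406.18318 — 4 statements merged into one kernel-verified Lean document; each statement's English description precedes it below -/
import Mathlib

section
/- Let n ≥ 3 and let H : Matrix (ZMod n) (ZMod n) ℂ be the Hermitian adjacency matrix of a mixed graph whose underlying graph is the n-cycle (H j l ≠ 0 if and only if l = j + 1 or l = j − 1) and which is an imaginary cycle: ∏_{j ∈ ZMod n} H j (j+1) ∈ {Complex.I, -Complex.I}. Then the characteristic polynomial of H equals X · p_{n−1} − 2 · p_{n−2}, where p_m denotes the characteristic polynomial (in ℂ[X]) of the adjacency matrix of the path graph on m vertices, with p_0 = 1. -/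
open Polynomial Filter

/-- A matrix `H` is the Hermitian adjacency matrix of a mixed graph: zero diagonal,
entries in `{0, 1, i, -i}`, and Hermitian. -/
def IsMixedAdj {V : Type*} (H : Matrix V V ℂ) : Prop :=
  (∀ v, H v v = 0) ∧
  (∀ u v, H u v = 0 ∨ H u v = 1 ∨ H u v = Complex.I ∨ H u v = -Complex.I) ∧
  (∀ u v, H u v = star (H v u))

/-- The spectral radius of a matrix: the maximum of `|λ|` over its eigenvalues. -/
noncomputable def specRad {V : Type*} [Fintype V] [DecidableEq V] (H : Matrix V V ℂ) : ℝ :=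
  sSup ((fun z : ℂ => ‖z‖) '' spectrum ℂ H)

/-- The largest (real) eigenvalue of a Hermitian matrix. -/
noncomputable def lam1 {V : Type*} [Fintype V] [DecidableEq V] (H : Matrix V V ℂ) : ℝ :=
  sSup {x : ℝ | (x : ℂ) ∈ spectrum ℂ H}

/-- The underlying simple graph of a mixed graph: `u ∼ v` iff `H u v ≠ 0`. -/
def underGraph {V : Type*} (H : Matrix V V ℂ) : SimpleGraph V :=
  SimpleGraph.fromRel fun u v => H u v ≠ 0

/-- The diameter of a finite simple graph. -/
noncomputable def gdiam {V : Type*} [Fintype V] (G : SimpleGraph V) : ℕ :=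
  Finset.univ.sup fun p : V × V => G.dist p.1 p.2

/-- Degree of a vertex in a mixed graph. -/
noncomputable def mdeg {V : Type*} (H : Matrix V V ℂ) (v : V) : ℕ :=
  Nat.card {u // H v u ≠ 0}

/-- Maximum degree of a mixed graph. -/
noncomputable def maxDeg {V : Type*} [Fintype V] (H : Matrix V V ℂ) : ℕ :=
  Finset.univ.sup (mdeg H)

/-- Adjacency matrix (over ℂ) of the path graph on `m` vertices. -/
def pathAdj (m : ℕ) : Matrix (Fin m) (Fin m) ℂ :=
  Matrix.of fun i j => if (i : ℕ) + 1 = (j : ℕ) ∨ (j : ℕ) + 1 = (i : ℕ) then 1 else 0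

/-- `p_m`: characteristic polynomial of the path on `m` vertices (`p_0 = 1`). -/
noncomputable def pPoly (m : ℕ) : Polynomial ℂ := (pathAdj m).charpoly

/-- Build a Hermitian matrix on `Fin n` from a generator of "upper" entries. -/
noncomputable def mkHerm (n : ℕ) (g : ℕ → ℕ → ℂ) : Matrix (Fin n) (Fin n) ℂ :=
  Matrix.of fun i j => g (i : ℕ) (j : ℕ) + star (g (j : ℕ) (i : ℕ))

/-- `C'_{n-1,n}`: imaginary `(n-1)`-cycle on `0,…,n-2` with a pendant vertex `n-1` at `0`. -/
noncomputable def CpPend (n : ℕ) : Matrix (Fin n) (Fin n) ℂ :=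
  mkHerm n fun a b =>
    if a + 1 = b ∧ b ≤ n - 2 then 1
    else if a = n - 2 ∧ b = 0 then Complex.I
    else if a = 0 ∧ b = n - 1 then 1 else 0

/-- `C'_{3,n}`: imaginary triangle on `0,1,2` with an undirected path `0,3,4,…,n-1`. -/
noncomputable def Cp3 (n : ℕ) : Matrix (Fin n) (Fin n) ℂ :=
  mkHerm n fun a b =>
    if (a = 0 ∧ b = 1) ∨ (a = 1 ∧ b = 2) ∨ (a = 0 ∧ b = 3) then 1
    else if a = 2 ∧ b = 0 then Complex.I
    else if 3 ≤ a ∧ a + 1 = b then 1 else 0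

/-- `C'_{k,k+2}`: imaginary `k`-cycle on `0,…,k-1` with a pendant path `0,k,k+1`. -/
noncomputable def CpTail (k : ℕ) : Matrix (Fin (k + 2)) (Fin (k + 2)) ℂ :=
  mkHerm (k + 2) fun a b =>
    if a + 1 = b ∧ b ≤ k - 1 then 1
    else if a = k - 1 ∧ b = 0 then Complex.I
    else if a = 0 ∧ b = k then 1
    else if a = k ∧ b = k + 1 then 1 else 0

/-- `D_{k,t}`: imaginary `k`-cycle with pendant vertices `k` at `0` and `k+1` at `t`. -/
noncomputable def Dkt (k t : ℕ) : Matrix (Fin (k + 2)) (Fin (k + 2)) ℂ :=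
  mkHerm (k + 2) fun a b =>
    if a + 1 = b ∧ b ≤ k - 1 then 1
    else if a = k - 1 ∧ b = 0 then Complex.I
    else if a = 0 ∧ b = k then 1
    else if a = t ∧ b = k + 1 then 1 else 0

/-- `C'_n`: the imaginary `n`-cycle on `ZMod n`. -/
noncomputable def CpCycle (n : ℕ) [NeZero n] : Matrix (ZMod n) (ZMod n) ℂ :=
  Matrix.of fun j l =>
    (if l = j + 1 then (if j = -1 then Complex.I else 1) else 0)
    + (if j = l + 1 then (if l = -1 then -Complex.I else 1) else 0)

/-- `C_n`: the undirected `n`-cycle. -/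
noncomputable def Cund (n : ℕ) : Matrix (Fin n) (Fin n) ℂ :=
  mkHerm n fun a b => if a + 1 = b ∨ (a = n - 1 ∧ b = 0) then 1 else 0

/-- `C''_n`: the negative `n`-cycle. -/
noncomputable def Cneg (n : ℕ) : Matrix (Fin n) (Fin n) ℂ :=
  mkHerm n fun a b =>
    if a + 1 = b ∧ b ≤ n - 2 then 1
    else if a = n - 2 ∧ b = n - 1 then Complex.I
    else if a = n - 1 ∧ b = 0 then Complex.I else 0

/-- `G''_{n-2,n/2}`: negative `(n-2)`-cycle with pendant edges at `v₁` and `v_{n/2}`. -/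
noncomputable def Gpp (n : ℕ) : Matrix (Fin n) (Fin n) ℂ :=
  mkHerm n fun a b =>
    if a + 1 = b ∧ b ≤ n - 4 then 1
    else if a = n - 4 ∧ b = n - 3 then Complex.I
    else if a = n - 3 ∧ b = 0 then Complex.I
    else if a = 0 ∧ b = n - 2 then 1
    else if a = n / 2 - 1 ∧ b = n - 1 then 1 else 0

/-- `U''_{k,m}`: negative `6`-cycle with pendant paths of `k` vertices at `v₁`
and `m` vertices at `v₄`. -/
noncomputable def Upp (k m : ℕ) : Matrix (Fin (6 + k + m)) (Fin (6 + k + m)) ℂ :=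
  mkHerm (6 + k + m) fun a b =>
    if a + 1 = b ∧ b ≤ 4 then 1
    else if a = 4 ∧ b = 5 then Complex.I
    else if a = 5 ∧ b = 0 then Complex.I
    else if a = 0 ∧ b = 6 ∧ 1 ≤ k then 1
    else if 6 ≤ a ∧ a + 1 = b ∧ b ≤ 5 + k then 1
    else if a = 3 ∧ b = 6 + k ∧ 1 ≤ m then 1
    else if 6 + k ≤ a ∧ a + 1 = b ∧ b ≤ 5 + k + m then 1 else 0

/-- `G''_{8,4}`: negative `8`-cycle with pendant edges at `v₁` and `v₄`. -/
noncomputable def Gpp84 : Matrix (Fin 10) (Fin 10) ℂ :=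
  mkHerm 10 fun a b =>
    if a + 1 = b ∧ b ≤ 6 then 1
    else if a = 6 ∧ b = 7 then Complex.I
    else if a = 7 ∧ b = 0 then Complex.I
    else if (a = 0 ∧ b = 8) ∨ (a = 3 ∧ b = 9) then 1 else 0

/-- `G''_{10,5}`: negative `10`-cycle with pendant edges at `v₁` and `v₅`. -/
noncomputable def Gpp105 : Matrix (Fin 12) (Fin 12) ℂ :=
  mkHerm 12 fun a b =>
    if a + 1 = b ∧ b ≤ 8 then 1
    else if a = 8 ∧ b = 9 then Complex.I
    else if a = 9 ∧ b = 0 then Complex.I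
    else if (a = 0 ∧ b = 10) ∨ (a = 4 ∧ b = 11) then 1 else 0

/-- `U''_6`: negative `6`-cycle with a pendant path of 2 vertices at `v₁`
and pendant edges at `v₃`, `v₅`. -/
noncomputable def Upp6 : Matrix (Fin 10) (Fin 10) ℂ :=
  mkHerm 10 fun a b =>
    if a + 1 = b ∧ b ≤ 4 then 1
    else if a = 4 ∧ b = 5 then Complex.I
    else if a = 5 ∧ b = 0 then Complex.I
    else if (a = 0 ∧ b = 6) ∨ (a = 6 ∧ b = 7) ∨ (a = 2 ∧ b = 8) ∨ (a = 4 ∧ b = 9) then 1 else 0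

/-- `U''_8`: negative `8`-cycle with pendant paths of 2 vertices at `v₁` and `v₅`. -/
noncomputable def Upp8 : Matrix (Fin 12) (Fin 12) ℂ :=
  mkHerm 12 fun a b =>
    if a + 1 = b ∧ b ≤ 6 then 1
    else if a = 6 ∧ b = 7 then Complex.I
    else if a = 7 ∧ b = 0 then Complex.I
    else if (a = 0 ∧ b = 8) ∨ (a = 8 ∧ b = 9) ∨ (a = 4 ∧ b = 10) ∨ (a = 10 ∧ b = 11) then 1
    else 0

/-- Two mixed graphs are switching isomorphic. -/
def IsSwitchIso {V₁ V₂ : Type*} (H₁ : Matrix V₁ V₁ ℂ) (H₂ : Matrix V₂ V₂ ℂ) : Prop :=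
  ∃ (σ : V₁ ≃ V₂) (d : V₁ → ℂ),
    (∀ v, d v = 1 ∨ d v = -1 ∨ d v = Complex.I ∨ d v = -Complex.I) ∧
    ((∀ u v, H₂ (σ u) (σ v) = (d u)⁻¹ * H₁ u v * d v) ∨
     (∀ u v, H₂ (σ u) (σ v) = (d u)⁻¹ * star (H₁ u v) * d v))

/-- `M` is switching isomorphic to an induced subgraph (principal submatrix) of `H`. -/
def IsSwitchSub {V U : Type*} (M : Matrix V V ℂ) (H : Matrix U U ℂ) : Prop :=
  ∃ f : V → U, Function.Injective f ∧ IsSwitchIso M (H.submatrix f f)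

/-- `x` is the largest positive real root of `p`. -/
def IsMaxPosRoot (p : Polynomial ℝ) (x : ℝ) : Prop :=
  0 < x ∧ p.eval x = 0 ∧ ∀ y : ℝ, 0 < y → p.eval y = 0 → y ≤ x

/-- The mixed graph obtained from `H` by attaching a pendant path of `n` new
vertices at `v`. -/
noncomputable def attachPath {V : Type*} [DecidableEq V] (H : Matrix V V ℂ) (v : V) (n : ℕ) :
    Matrix (V ⊕ Fin n) (V ⊕ Fin n) ℂ :=
  Matrix.of fun a b =>
    match a, b with
    | Sum.inl u, Sum.inl w => H u w
    | Sum.inl u, Sum.inr i => if u = v ∧ (i : ℕ) = 0 then 1 else 0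
    | Sum.inr i, Sum.inl u => if u = v ∧ (i : ℕ) = 0 then 1 else 0
    | Sum.inr i, Sum.inr j => if (i : ℕ) + 1 = (j : ℕ) ∨ (j : ℕ) + 1 = (i : ℕ) then 1 else 0


namespace Stmt2Aux
open Matrix

noncomputable section

abbrev Rp := Polynomial ℂ

def Tm (n : ℕ) : Matrix (Fin n) (Fin n) Rp :=
  Matrix.of fun i j => if (i:ℕ) = j then X else if (i:ℕ)+1 = j ∨ (j:ℕ)+1 = i then -1 else 0

lemma sval {n : ℕ} (p : Fin (n+1)) (i : Fin n) :
    ((p.succAbove i : Fin (n+1)) : ℕ) = if (i:ℕ) < (p:ℕ) then (i:ℕ) else (i:ℕ)+1 := by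
  rw [Fin.succAbove]
  split_ifs with h h2 h3 <;> simp_all [Fin.lt_def]

lemma pPoly_eq (n : ℕ) : pPoly n = (Tm n).det := by
  unfold pPoly Matrix.charpoly
  congr 1
  ext i j
  by_cases h : i = j
  · subst h
    simp [charmatrix_apply_eq, Tm, pathAdj]
  · rw [charmatrix_apply_ne _ _ _ h]
    have : (i:ℕ) ≠ j := fun hh => h (Fin.ext hh)
    simp [Tm, pathAdj, this]
    split_ifs <;> simp

lemma detT_zero : (Tm 0).det = 1 := Matrix.det_fin_zero
lemma detT_one : (Tm 1).det = X := by simp [Matrix.det_fin_one, Tm]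

lemma detT_rec (k : ℕ) : (Tm (k+2)).det = X * (Tm (k+1)).det - (Tm k).det := by
  rw [Matrix.det_succ_row (Tm (k+2)) (Fin.last (k+1))]
  rw [Finset.sum_eq_add_of_mem (Fin.last (k+1)) ⟨k, by omega⟩ (Finset.mem_univ _)
    (Finset.mem_univ _) (by simp [Fin.ext_iff]) ?_]
  · have h1 : (Tm (k+2)).submatrix (Fin.last (k+1)).succAbove (Fin.last (k+1)).succAbove
        = Tm (k+1) := by
      ext i j
      simp only [Matrix.submatrix_apply, Tm, Matrix.of_apply, sval]
      have hi : (i:ℕ) < k+1 := i.isLt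
      have hj : (j:ℕ) < k+1 := j.isLt
      simp [Fin.val_last, hi, hj]
    have h2 : ((Tm (k+2)).submatrix (Fin.last (k+1)).succAbove
        (⟨k, by omega⟩ : Fin (k+2)).succAbove).det = -(Tm k).det := by
      rw [Matrix.det_succ_column _ (Fin.last k)]
      rw [Finset.sum_eq_single_of_mem (Fin.last k) (Finset.mem_univ _) ?_]
      · have h3 : ((Tm (k+2)).submatrix (Fin.last (k+1)).succAbove
            (⟨k, by omega⟩ : Fin (k+2)).succAbove).submatrix
            (Fin.last k).succAbove (Fin.last k).succAbove = Tm k := by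
          ext i j
          simp only [Matrix.submatrix_apply, Tm, Matrix.of_apply, sval]
          have hi : (i:ℕ) < k := i.isLt
          have hj : (j:ℕ) < k := j.isLt
          simp only [Fin.val_last, hi, if_pos, hj]
          have : (i:ℕ) < k+1 := by omega
          have : (j:ℕ) < k := hj
          split_ifs <;> simp_all <;> omega
        rw [h3]
        have hentry : (Tm (k+2)).submatrix (Fin.last (k+1)).succAbove
            (⟨k, by omega⟩ : Fin (k+2)).succAbove (Fin.last k) (Fin.last k) = -1 := by
          simp only [Matrix.submatrix_apply, Tm, Matrix.of_apply, sval]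
          simp [Fin.val_last]
        rw [hentry]
        ring_nf
        simp only [Fin.val_last, pow_mul]
        have h4 : (((-1:Rp))^k)^2 = 1 := by
          rw [← pow_mul, mul_comm, pow_mul]; simp
        rw [h4]; ring
      · intro i _ hne
        have hz : (Tm (k+2)).submatrix (Fin.last (k+1)).succAbove
            (⟨k, by omega⟩ : Fin (k+2)).succAbove i (Fin.last k) = 0 := by
          simp only [Matrix.submatrix_apply, Tm, Matrix.of_apply, sval]
          have hi : (i:ℕ) < k+1 := i.isLt
          have hine : (i:ℕ) ≠ k := fun h => hne (Fin.ext (by simp [Fin.val_last, h]))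
          simp only [Fin.val_last]
          split_ifs <;> first | rfl | omega
        rw [hz]; ring
    rw [h1, h2]
    have e1 : Tm (k+2) (Fin.last (k+1)) (Fin.last (k+1)) = X := by
      simp [Tm, Fin.val_last]
    have e2 : Tm (k+2) (Fin.last (k+1)) ⟨k, by omega⟩ = -1 := by
      simp [Tm, Fin.val_last]
    rw [e1, e2]
    ring_nf
    simp only [Fin.val_last, pow_mul]
    ring_nf
    have h4 : ((-1:Rp))^(k*2) = 1 := by
      rw [mul_comm, pow_mul]; norm_num
    rw [h4]; ring
  · intro c _ hc
    obtain ⟨hc1, hc2⟩ := hc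
    have hz : Tm (k+2) (Fin.last (k+1)) c = 0 := by
      have h1 : (c:ℕ) ≠ k+1 := fun h => hc1 (Fin.ext (by simp [Fin.val_last, h]))
      have h2 : (c:ℕ) ≠ k := fun h => hc2 (Fin.ext (by simp [h]))
      simp only [Tm, Matrix.of_apply, Fin.val_last]
      split_ifs <;> first | rfl | omega
    rw [hz]; ring

/-- lower-triangular helper -/
def G0 (k : ℕ) : Matrix (Fin k) (Fin k) Rp :=
  Matrix.of fun r s => if (r:ℕ) = s then -1 else if (s:ℕ)+1 = r then X
    else if (s:ℕ)+2 = r then -1 else 0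

/-- tridiagonal with one corner -/
def Mone (n : ℕ) (v : Rp) : Matrix (Fin n) (Fin n) Rp :=
  Matrix.of fun i j => if (i:ℕ) = j then X else if (i:ℕ)+1 = j ∨ (j:ℕ)+1 = i then -1
    else if (i:ℕ) = 0 ∧ (j:ℕ) = n-1 then -v else 0

/-- cycle char matrix with both corners -/
def Mcy (n : ℕ) (u v : Rp) : Matrix (Fin n) (Fin n) Rp :=
  Matrix.of fun i j => if (i:ℕ) = j then X else if (i:ℕ)+1 = j ∨ (j:ℕ)+1 = i then -1
    else if (i:ℕ) = n-1 ∧ (j:ℕ) = 0 then -u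
    else if (i:ℕ) = 0 ∧ (j:ℕ) = n-1 then -v else 0

lemma detG0 (k : ℕ) : (G0 k).det = (-1)^k := by
  rw [Matrix.det_of_lowerTriangular (G0 k) ?_]
  · simp [G0]
  · intro i j hij
    have h' : i < j := hij
    have h : (i:ℕ) < j := h'
    simp only [G0, Matrix.of_apply]
    split_ifs <;> first | rfl | omega

-- E1
lemma detE1 (N : ℕ) :
    ((Tm (N+3)).updateCol (Fin.last (N+2)) (Pi.single 0 1)).det = 1 := by
  rw [Matrix.det_succ_column _ (Fin.last (N+2))]
  rw [Finset.sum_eq_single_of_mem (0 : Fin (N+3)) (Finset.mem_univ _) ?_]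
  · have htri : (((Tm (N+3)).updateCol (Fin.last (N+2)) (Pi.single 0 1)).submatrix
        (0 : Fin (N+3)).succAbove (Fin.last (N+2)).succAbove).det
        = ∏ i : Fin (N+2), (((Tm (N+3)).updateCol (Fin.last (N+2)) (Pi.single 0 1)).submatrix
        (0 : Fin (N+3)).succAbove (Fin.last (N+2)).succAbove) i i := by
      apply Matrix.det_of_upperTriangular
      intro i j hij
      have hij' : (j:ℕ) < i := hij
      have h1 : (((Fin.last (N+2)).succAbove j : Fin (N+3)) : ℕ) = (j:ℕ) := by
        rw [sval]; simp [Fin.val_last, j.isLt]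
      have h2 : (((0 : Fin (N+3)).succAbove i : Fin (N+3)) : ℕ) = (i:ℕ)+1 := by
        rw [sval]; simp
      have hne : (Fin.last (N+2)).succAbove j ≠ Fin.last (N+2) := by
        intro h; rw [← h1] at hij'; rw [h] at hij'; simp [Fin.val_last] at hij'; omega
      simp only [Matrix.submatrix_apply, Matrix.updateCol_apply, if_neg hne,
        Tm, Matrix.of_apply, h1, h2]
      split_ifs <;> (try omega) <;> (try (exfalso; omega)) <;> rfl
    have hdiag : ∀ i : Fin (N+2), (((Tm (N+3)).updateCol (Fin.last (N+2))
        (Pi.single 0 1)).submatrix (0 : Fin (N+3)).succAbove (Fin.last (N+2)).succAbove) i i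
        = -1 := by
      intro i
      have h1 : (((Fin.last (N+2)).succAbove i : Fin (N+3)) : ℕ) = (i:ℕ) := by
        rw [sval]; simp [Fin.val_last, i.isLt]
      have h2 : (((0 : Fin (N+3)).succAbove i : Fin (N+3)) : ℕ) = (i:ℕ)+1 := by
        rw [sval]; simp
      have hne : (Fin.last (N+2)).succAbove i ≠ Fin.last (N+2) := by
        intro h
        have := congrArg Fin.val h
        rw [h1] at this; simp [Fin.val_last] at this; omega
      simp only [Matrix.submatrix_apply, Matrix.updateCol_apply, if_neg hne,
        Tm, Matrix.of_apply, h1, h2]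
      split_ifs <;> (try omega) <;> (try (exfalso; omega)) <;> (try rfl) <;> tauto
    rw [htri, Finset.prod_congr rfl (fun i _ => hdiag i), Finset.prod_const]
    have hent : ((Tm (N+3)).updateCol (Fin.last (N+2)) (Pi.single 0 1)) 0 (Fin.last (N+2))
        = 1 := by
      simp [Matrix.updateCol_apply]
    rw [hent]
    simp [Fin.val_last]
    rw [← pow_add, ← two_mul, pow_mul]
    simp
  · intro i _ hi
    have hz : ((Tm (N+3)).updateCol (Fin.last (N+2)) (Pi.single 0 1)) i (Fin.last (N+2))
        = 0 := by
      simp [Matrix.updateCol_apply, Pi.single_apply, hi]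
    rw [hz]; ring

-- det Mone
lemma detMone (N : ℕ) (v : Rp) :
    (Mone (N+3) v).det = (Tm (N+3)).det - v := by
  have hsplit : Mone (N+3) v = (Tm (N+3)).updateCol (Fin.last (N+2))
      ((fun i => Tm (N+3) i (Fin.last (N+2))) + (Pi.single (0 : Fin (N+3)) (-v) : Fin (N+3) → Rp)) := by
    refine Matrix.ext fun i j => ?_
    by_cases hj : j = Fin.last (N+2)
    · subst hj
      simp only [Matrix.updateCol_apply, if_pos rfl, Mone, Tm, Matrix.of_apply,
        Fin.val_last, Pi.add_apply, Pi.single_apply, Fin.ext_iff, Fin.val_zero]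
      split_ifs <;> (try omega) <;> (try (exfalso; omega)) <;> ring
    · simp only [Matrix.updateCol_apply, if_neg hj, Mone, Tm, Matrix.of_apply]
      have hj' : (j:ℕ) ≠ N+2 := fun h => hj (Fin.ext (by simp [Fin.val_last, h]))
      split_ifs <;> first | rfl | omega
  rw [hsplit, Matrix.det_updateCol_add, Matrix.updateCol_eq_self]
  have : (Pi.single (0 : Fin (N+3)) (-v)) = (-v) • (Pi.single 0 1 : Fin (N+3) → Rp) := by
    funext x
    by_cases h : x = 0
    · subst h; simp
    · simp [h]
  rw [this, Matrix.det_updateCol_smul, detE1]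
  ring

-- inner minor for E2
lemma detE2inner (N : ℕ) :
    ((G0 (N+2)).updateCol (Fin.last (N+1)) (Pi.single 0 1)).det
      = (-1)^(N+1) * (Tm (N+1)).det := by
  rw [Matrix.det_succ_column _ (Fin.last (N+1))]
  rw [Finset.sum_eq_single_of_mem (0 : Fin (N+2)) (Finset.mem_univ _) ?_]
  · have hminor : (((G0 (N+2)).updateCol (Fin.last (N+1)) (Pi.single 0 1)).submatrix
        (0 : Fin (N+2)).succAbove (Fin.last (N+1)).succAbove) = Tm (N+1) := by
      refine Matrix.ext fun r s => ?_
      have h1 : (((Fin.last (N+1)).succAbove s : Fin (N+2)) : ℕ) = (s:ℕ) := by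
        rw [sval]; simp [Fin.val_last, s.isLt]
      have h2 : (((0 : Fin (N+2)).succAbove r : Fin (N+2)) : ℕ) = (r:ℕ)+1 := by
        rw [sval]; simp
      have hne : (Fin.last (N+1)).succAbove s ≠ Fin.last (N+1) := by
        intro h
        have := congrArg Fin.val h
        rw [h1] at this; simp [Fin.val_last] at this; omega
      simp only [Matrix.submatrix_apply, Matrix.updateCol_apply, if_neg hne,
        G0, Tm, Matrix.of_apply, h1, h2]
      split_ifs <;> (try rfl) <;> (try omega) <;> (try (exfalso; omega)) <;> tauto
    rw [hminor]
    have hent : ((G0 (N+2)).updateCol (Fin.last (N+1)) (Pi.single 0 1)) 0 (Fin.last (N+1))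
        = 1 := by
      simp [Matrix.updateCol_apply]
    rw [hent]
    simp [Fin.val_last]
  · intro i _ hi
    have hz : ((G0 (N+2)).updateCol (Fin.last (N+1)) (Pi.single 0 1)) i (Fin.last (N+1))
        = 0 := by
      simp [Matrix.updateCol_apply, Pi.single_apply, hi]
    rw [hz]; ring

-- E2
lemma detE2 (N : ℕ) (v : Rp) :
    ((Mone (N+3) v).updateRow (Fin.last (N+2)) (Pi.single 0 1)).det
      = 1 + v * (Tm (N+1)).det := by
  rw [Matrix.det_succ_row _ (Fin.last (N+2))]
  rw [Finset.sum_eq_single_of_mem (0 : Fin (N+3)) (Finset.mem_univ _) ?_]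
  · have hminor : (((Mone (N+3) v).updateRow (Fin.last (N+2)) (Pi.single 0 1)).submatrix
        (Fin.last (N+2)).succAbove (0 : Fin (N+3)).succAbove)
        = (G0 (N+2)).updateCol (Fin.last (N+1))
            ((fun r => G0 (N+2) r (Fin.last (N+1)))
              + (Pi.single (0 : Fin (N+2)) (-v) : Fin (N+2) → Rp)) := by
      refine Matrix.ext fun r s => ?_
      have h1 : (((Fin.last (N+2)).succAbove r : Fin (N+3)) : ℕ) = (r:ℕ) := by
        rw [sval]; simp [Fin.val_last, r.isLt]
      have h2 : (((0 : Fin (N+3)).succAbove s : Fin (N+3)) : ℕ) = (s:ℕ)+1 := by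
        rw [sval]; simp
      have hne : (Fin.last (N+2)).succAbove r ≠ Fin.last (N+2) := by
        intro h
        have := congrArg Fin.val h
        rw [h1] at this; simp [Fin.val_last] at this; omega
      simp only [Matrix.submatrix_apply, Matrix.updateRow_apply, if_neg hne,
        Matrix.updateCol_apply, Mone, G0, Matrix.of_apply, h1, h2,
        Pi.add_apply, Pi.single_apply, Fin.ext_iff, Fin.val_last, Fin.val_zero]
      split_ifs <;> (try rfl) <;> (try ring) <;> (try omega) <;>
        (try (exfalso; omega)) <;> tauto
    rw [hminor]
    rw [Matrix.det_updateCol_add, Matrix.updateCol_eq_self]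
    have hsm : (Pi.single (0 : Fin (N+2)) (-v)) = (-v) • (Pi.single 0 1 : Fin (N+2) → Rp) := by
      funext x
      by_cases h : x = 0
      · subst h; simp
      · simp [h]
    rw [hsm, Matrix.det_updateCol_smul, detE2inner, detG0]
    have hent : ((Mone (N+3) v).updateRow (Fin.last (N+2)) (Pi.single 0 1))
        (Fin.last (N+2)) 0 = 1 := by
      simp [Matrix.updateRow_apply]
    rw [hent]
    simp only [Fin.val_last, Fin.val_zero, add_zero]
    have e1 : ((-1:Rp))^(N+2) * (-1)^(N+2) = 1 := by
      rw [← pow_add, ← two_mul, pow_mul]; norm_num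
    have e2 : ((-1:Rp))^(N+2) * ((-1)^(N+1)) = -1 := by
      rw [← pow_add, show N+2+(N+1) = 2*(N+1)+1 by ring, pow_succ, pow_mul]; norm_num
    calc (-1:Rp)^(N+2) * 1 * ((-1)^(N+2) + -v * ((-1)^(N+1) * (Tm (N+1)).det))
        = ((-1:Rp)^(N+2) * (-1)^(N+2)) + (-v) * (((-1:Rp))^(N+2) * ((-1)^(N+1))) * (Tm (N+1)).det := by ring
      _ = 1 + v * (Tm (N+1)).det := by rw [e1, e2]; ring
  · intro j _ hj
    have hz : ((Mone (N+3) v).updateRow (Fin.last (N+2)) (Pi.single 0 1))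
        (Fin.last (N+2)) j = 0 := by
      simp [Matrix.updateRow_apply, Pi.single_apply, hj]
    rw [hz]; ring

-- the cycle determinant
lemma detMcy (N : ℕ) (u v : Rp) :
    (Mcy (N+3) u v).det
      = (Tm (N+3)).det - u - v - u * v * (Tm (N+1)).det := by
  have hsplit : Mcy (N+3) u v = (Mone (N+3) v).updateRow (Fin.last (N+2))
      ((fun j => Mone (N+3) v (Fin.last (N+2)) j)
        + (Pi.single (0 : Fin (N+3)) (-u) : Fin (N+3) → Rp)) := by
    refine Matrix.ext fun i j => ?_
    by_cases hi : i = Fin.last (N+2)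
    · subst hi
      simp only [Matrix.updateRow_apply, if_pos rfl, Mcy, Mone, Matrix.of_apply,
        Fin.val_last, Pi.add_apply, Pi.single_apply, Fin.ext_iff, Fin.val_zero]
      split_ifs <;> (try rfl) <;> (try ring) <;> (try omega) <;>
        (try (exfalso; omega)) <;> tauto
    · have hi' : (i:ℕ) ≠ N+2 := fun h => hi (Fin.ext (by simp [Fin.val_last, h]))
      simp only [Matrix.updateRow_apply, if_neg hi, Mcy, Mone, Matrix.of_apply]
      split_ifs <;> (try rfl) <;> (try omega) <;> (try (exfalso; omega)) <;> tauto
  rw [hsplit, Matrix.det_updateRow_add, Matrix.updateRow_eq_self]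
  have hsm : (Pi.single (0 : Fin (N+3)) (-u)) = (-u) • (Pi.single 0 1 : Fin (N+3) → Rp) := by
    funext x
    by_cases h : x = 0
    · subst h; simp
    · simp [h]
  rw [hsm, Matrix.det_updateRow_smul, detE2, detMone]
  ring

end
end Stmt2Aux

set_option maxHeartbeats 1000000 in
/-- charpoly of an imaginary `n`-cycle (`n = m + 3 ≥ 3`). -/
theorem stmt2 (m : ℕ) (H : Matrix (ZMod (m + 3)) (ZMod (m + 3)) ℂ)
    (hH : IsMixedAdj H)
    (hadj : ∀ j l : ZMod (m + 3), H j l ≠ 0 ↔ (l = j + 1 ∨ l = j - 1))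
    (him : (∏ j : ZMod (m + 3), H j (j + 1)) = Complex.I ∨
           (∏ j : ZMod (m + 3), H j (j + 1)) = -Complex.I) :
    H.charpoly = X * pPoly (m + 2) - 2 * pPoly (m + 1) := by
  classical
  haveI : Fact (1 < m+3) := ⟨by omega⟩
  obtain ⟨hdiag, hent, hherm⟩ := hH
  -- adjacency basics
  have hval1 : (1 : ZMod (m+3)).val = 1 := ZMod.val_one (m+3)
  have hvadd : ∀ j : ZMod (m+3), (j + 1).val = (j.val + 1) % (m+3) := by
    intro j; rw [ZMod.val_add, hval1]
  have hvadj : ∀ j l : ZMod (m+3), l = j + 1 ↔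
      (j.val + 1 = l.val ∨ (j.val = m + 2 ∧ l.val = 0)) := by
    intro j l
    constructor
    · intro h
      subst h
      rw [hvadd]
      have := j.val_lt
      rcases Nat.lt_or_ge (j.val + 1) (m+3) with h1 | h1
      · left; rw [Nat.mod_eq_of_lt h1]
      · right
        have hj : j.val = m + 2 := by omega
        constructor
        · exact hj
        · rw [hj, show m + 2 + 1 = m + 3 from rfl, Nat.mod_self]
    · intro h
      apply ZMod.val_injective
      rw [hvadd]
      have := j.val_lt
      have := l.val_lt
      rcases h with h | h
      · rw [Nat.mod_eq_of_lt (by omega), h]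
      · rw [h.1, h.2, show m + 2 + 1 = m + 3 from rfl, Nat.mod_self]
  have hadj' : ∀ j l : ZMod (m+3), H j l ≠ 0 ↔ (l = j + 1 ∨ j = l + 1) := by
    intro j l
    rw [hadj j l]
    constructor
    · rintro (h | h)
      · exact Or.inl h
      · right; rw [h]; ring
    · rintro (h | h)
      · exact Or.inl h
      · right; rw [h]; ring
  -- the equivalence ZMod (m+3) ≃ Fin (m+3)
  let ez : ZMod (m+3) ≃ Fin (m+3) :=
    ⟨fun z => ⟨z.val, z.val_lt⟩, fun i => ((i : ℕ) : ZMod (m+3)),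
      fun z => ZMod.natCast_rightInverse z,
      fun i => Fin.ext (ZMod.val_cast_of_lt i.isLt)⟩
  have hvv : ∀ i : Fin (m+3), (ez.symm i).val = (i : ℕ) := fun i =>
    ZMod.val_cast_of_lt i.isLt
  have hcastval : ∀ z : ZMod (m+3), ((z.val : ℕ) : ZMod (m+3)) = z := fun z =>
    ZMod.natCast_rightInverse z
  -- edge entries
  set a : ℕ → ℂ := fun k => H (k : ZMod (m+3)) ((k : ZMod (m+3)) + 1) with ha_def
  have haH : ∀ j : ZMod (m+3), a j.val = H j (j + 1) := by
    intro j; simp only [ha_def]; rw [hcastval j]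
  have ha1 : ∀ k : ℕ, a k * star (a k) = 1 := by
    intro k
    have hne : a k ≠ 0 := by
      simp only [ha_def]
      rw [hadj']
      exact Or.inl rfl
    rcases hent (k : ZMod (m+3)) ((k : ZMod (m+3)) + 1) with h | h | h | h
    · exact absurd h hne
    all_goals simp only [ha_def] at *; rw [h]; simp [Complex.ext_iff]
  -- gauge
  set d : ZMod (m+3) → ℂ := fun j => ∏ k ∈ Finset.range j.val, star (a k) with hd_def
  have hd1 : ∀ j, d j * star (d j) = 1 := by
    intro j
    simp only [hd_def, star_prod, star_star]
    rw [← Finset.prod_mul_distrib]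
    rw [Finset.prod_congr rfl fun k _ => by rw [mul_comm, ha1 k]]
    exact Finset.prod_const_one
  have hd0 : d 0 = 1 := by simp only [hd_def]; simp [ZMod.val_zero]
  set H' : Matrix (ZMod (m+3)) (ZMod (m+3)) ℂ :=
    Matrix.of (fun j l => star (d j) * H j l * d l) with hH'_def
  have hH'app : ∀ j l, H' j l = star (d j) * H j l * d l := fun j l => rfl
  -- charpoly preserved
  have hcp : H'.charpoly = H.charpoly := by
    have hfact : Matrix.charmatrix H' =
        Matrix.diagonal (fun j => Polynomial.C (star (d j))) * Matrix.charmatrix H *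
          Matrix.diagonal (fun j => Polynomial.C (d j)) := by
      refine Matrix.ext fun j l => ?_
      rw [Matrix.mul_diagonal, Matrix.diagonal_mul]
      by_cases h : j = l
      · subst h
        rw [Matrix.charmatrix_apply_eq, Matrix.charmatrix_apply_eq, hH'app, hdiag]
        have : Polynomial.C (star (d j)) * Polynomial.C (d j) = 1 := by
          rw [← Polynomial.C_mul, mul_comm, hd1]; simp
        ring_nf
        simp only [map_zero, zero_mul, sub_zero]
        rw [mul_assoc, this, mul_one]
      · rw [Matrix.charmatrix_apply_ne _ _ _ h, Matrix.charmatrix_apply_ne _ _ _ h, hH'app]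
        simp only [Polynomial.C_mul]
        ring
    show (Matrix.charmatrix H').det = (Matrix.charmatrix H).det
    rw [hfact, Matrix.det_mul, Matrix.det_mul, Matrix.det_diagonal, Matrix.det_diagonal]
    have : (∏ i : ZMod (m+3), Polynomial.C (star (d i))) *
        (∏ i : ZMod (m+3), Polynomial.C (d i)) = 1 := by
      rw [← Finset.prod_mul_distrib]
      rw [Finset.prod_congr rfl fun k _ => ?_]
      · exact Finset.prod_const_one
      · rw [← Polynomial.C_mul, mul_comm, hd1]; simp
    calc (∏ i : ZMod (m+3), Polynomial.C (star (d i))) * (Matrix.charmatrix H).det *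
          (∏ i : ZMod (m+3), Polynomial.C (d i))
        = (∏ i : ZMod (m+3), Polynomial.C (star (d i))) *
          (∏ i : ZMod (m+3), Polynomial.C (d i)) * (Matrix.charmatrix H).det := by ring
      _ = (Matrix.charmatrix H).det := by rw [this, one_mul]
  -- the cycle constant
  set c : ℂ := ∏ j : ZMod (m + 3), H j (j + 1) with hc_def
  have hcprod : ∏ k ∈ Finset.range (m+3), a k = c := by
    have h1 : c = ∏ j : ZMod (m+3), a (ZMod.val j) := by
      rw [hc_def]
      exact Finset.prod_congr rfl fun j _ => (haH j).symm
    have h2 : ∏ j : ZMod (m+3), a (ZMod.val j) = ∏ i : Fin (m+3), a ((ez.symm i).val) :=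
      (Equiv.prod_comp ez.symm (fun z => a (ZMod.val z))).symm
    have h3 : ∏ i : Fin (m+3), a ((ez.symm i).val) = ∏ i : Fin (m+3), a (i:ℕ) :=
      Finset.prod_congr rfl fun i _ => by rw [hvv]
    rw [h1, h2, h3, Fin.prod_univ_eq_prod_range]
  -- entry computations for the reindexed matrix
  set E : Matrix (Fin (m+3)) (Fin (m+3)) ℂ := (Matrix.reindex ez ez H') with hE_def
  have hEapp : ∀ i j : Fin (m+3), E i j = H' (ez.symm i) (ez.symm j) := fun i j => rfl
  have hsucc : ∀ i j : Fin (m+3), (i:ℕ) + 1 = (j:ℕ) → ez.symm j = ez.symm i + 1 := by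
    intro i j h
    have : (ez.symm i).val + 1 = (ez.symm j).val := by rw [hvv, hvv, h]
    exact (hvadj _ _).2 (Or.inl this)
  have hdsucc : ∀ i j : Fin (m+3), (i:ℕ) + 1 = (j:ℕ) →
      d (ez.symm j) = d (ez.symm i) * star (a (i:ℕ)) := by
    intro i j h
    simp only [hd_def]
    rw [hvv, hvv, ← h, Finset.prod_range_succ]
  have hE2 : ∀ i j : Fin (m+3), (i:ℕ) + 1 = (j:ℕ) → E i j = 1 := by
    intro i j h
    rw [hEapp, hH'app, hdsucc i j h, hsucc i j h, ← haH, hvv]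
    calc star (d (ez.symm i)) * a (i:ℕ) * (d (ez.symm i) * star (a (i:ℕ)))
        = (d (ez.symm i) * star (d (ez.symm i))) * (a (i:ℕ) * star (a (i:ℕ))) := by ring
      _ = 1 := by rw [hd1, ha1, one_mul]
  have hEherm : ∀ i j : Fin (m+3), E i j = star (E j i) := by
    intro i j
    rw [hEapp, hEapp, hH'app, hH'app, hherm (ez.symm i) (ez.symm j)]
    simp only [star_mul, star_star]
    ring
  have hE3 : ∀ i j : Fin (m+3), (j:ℕ) + 1 = (i:ℕ) → E i j = 1 := by
    intro i j h
    rw [hEherm, hE2 j i h]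
    simp
  have hE4 : ∀ i j : Fin (m+3), (i:ℕ) = m + 2 → (j:ℕ) = 0 → E i j = c := by
    intro i j hi hj
    have hj1 : ez.symm j = ez.symm i + 1 := by
      refine (hvadj _ _).2 (Or.inr ⟨?_, ?_⟩)
      · rw [hvv, hi]
      · rw [hvv, hj]
    have hdj : d (ez.symm j) = 1 := by
      simp only [hd_def]; rw [hvv, hj]; simp
    have hdi : star (d (ez.symm i)) = ∏ k ∈ Finset.range (m+2), a k := by
      simp only [hd_def]; rw [hvv, hi]
      simp [star_prod, star_star]
    rw [hEapp, hH'app, hdj, hdi, mul_one, hj1, ← haH, hvv, hi, ← Finset.prod_range_succ]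
    exact hcprod
  have hE5 : ∀ i j : Fin (m+3), (i:ℕ) = 0 → (j:ℕ) = m + 2 → E i j = star c := by
    intro i j hi hj
    rw [hEherm, hE4 j i hj hi]
  have hE1 : ∀ i j : Fin (m+3), (i:ℕ) = (j:ℕ) → E i j = 0 := by
    intro i j h
    have : i = j := Fin.ext h
    subst this
    rw [hEapp, hH'app, hdiag]
    ring
  have hE6 : ∀ i j : Fin (m+3), ¬((i:ℕ) = (j:ℕ)) → ¬((i:ℕ)+1 = (j:ℕ)) →
      ¬((j:ℕ)+1 = (i:ℕ)) → ¬((i:ℕ) = m+2 ∧ (j:ℕ) = 0) → ¬((i:ℕ) = 0 ∧ (j:ℕ) = m+2) →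
      E i j = 0 := by
    intro i j h1 h2 h3 h4 h5
    have hz : H (ez.symm i) (ez.symm j) = 0 := by
      by_contra hne
      rcases (hadj' _ _).1 hne with h | h
      · rcases (hvadj _ _).1 h with h' | h'
        · rw [hvv, hvv] at h'; exact h2 h'
        · rw [hvv, hvv] at h'
          have := i.isLt
          have := j.isLt
          exact h4 ⟨h'.1, h'.2⟩
      · rcases (hvadj _ _).1 h with h' | h'
        · rw [hvv, hvv] at h'; exact h3 h'
        · rw [hvv, hvv] at h'
          exact h5 ⟨h'.2, h'.1⟩
    rw [hEapp, hH'app, hz]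
    ring
  -- identify the Matrix.charmatrix with Mcy
  have hkey : Matrix.charmatrix E = Stmt2Aux.Mcy (m+3) (Polynomial.C c) (Polynomial.C (star c)) := by
    refine Matrix.ext fun i j => ?_
    by_cases h : i = j
    · subst h
      rw [Matrix.charmatrix_apply_eq, hE1 i i rfl]
      simp [Stmt2Aux.Mcy]
    · have hne : (i:ℕ) ≠ (j:ℕ) := fun hh => h (Fin.ext hh)
      rw [Matrix.charmatrix_apply_ne _ _ _ h]
      by_cases h2 : (i:ℕ) + 1 = (j:ℕ)
      · rw [hE2 i j h2]
        simp only [Stmt2Aux.Mcy, Matrix.of_apply, if_neg hne]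
        rw [if_pos (Or.inl h2)]
        simp
      · by_cases h3 : (j:ℕ) + 1 = (i:ℕ)
        · rw [hE3 i j h3]
          simp only [Stmt2Aux.Mcy, Matrix.of_apply, if_neg hne]
          rw [if_pos (Or.inr h3)]
          simp
        · by_cases h4 : (i:ℕ) = m + 2 ∧ (j:ℕ) = 0
          · rw [hE4 i j h4.1 h4.2]
            simp only [Stmt2Aux.Mcy, Matrix.of_apply, if_neg hne]
            rw [if_neg (by tauto), if_pos (by omega)]
          · by_cases h5 : (i:ℕ) = 0 ∧ (j:ℕ) = m + 2
            · rw [hE5 i j h5.1 h5.2]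
              simp only [Stmt2Aux.Mcy, Matrix.of_apply, if_neg hne]
              rw [if_neg (by tauto), if_neg (by omega), if_pos (by omega)]
            · rw [hE6 i j hne h2 h3 h4 h5]
              simp only [Stmt2Aux.Mcy, Matrix.of_apply, if_neg hne]
              rw [if_neg (by tauto), if_neg (by omega), if_neg (by omega)]
              simp
  -- finish
  have hcstar : c * star c = 1 ∧ c + star c = 0 := by
    rcases him with h | h
    · rw [hc_def] at *
      rw [h]; constructor <;> simp [Complex.ext_iff]
    · rw [hc_def] at *
      rw [h]; constructor <;> simp [Complex.ext_iff]
  have hchain : H.charpoly = (Stmt2Aux.Mcy (m+3) (Polynomial.C c) (Polynomial.C (star c))).det := by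
    rw [← hcp, ← Matrix.charpoly_reindex ez H']
    show (Matrix.charmatrix E).det = _
    rw [hkey]
  rw [hchain, Stmt2Aux.detMcy m (Polynomial.C c) (Polynomial.C (star c))]
  have h1 : Polynomial.C c * Polynomial.C (star c) = 1 := by
    rw [← Polynomial.C_mul, hcstar.1]; simp
  have h2 : (Polynomial.C c : Stmt2Aux.Rp) + Polynomial.C (star c) = 0 := by
    rw [← Polynomial.C_add, hcstar.2]; simp
  rw [Stmt2Aux.detT_rec (m+1)]
  rw [Stmt2Aux.pPoly_eq (m+2), Stmt2Aux.pPoly_eq (m+1)]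
  have : (Stmt2Aux.Tm (m+1+2)).det = (Stmt2Aux.Tm (m+3)).det := rfl
  calc X * (Stmt2Aux.Tm (m+1+1)).det - (Stmt2Aux.Tm (m+1)).det - Polynomial.C c - Polynomial.C (star c) -
        Polynomial.C c * Polynomial.C (star c) * (Stmt2Aux.Tm (m+1)).det
      = X * (Stmt2Aux.Tm (m+2)).det - (Stmt2Aux.Tm (m+1)).det -
          (Polynomial.C c + Polynomial.C (star c)) -
          (Polynomial.C c * Polynomial.C (star c)) * (Stmt2Aux.Tm (m+1)).det := by ring_nf
    _ = X * (Stmt2Aux.Tm (m+2)).det - 2 * (Stmt2Aux.Tm (m+1)).det := by rw [h1, h2]; ring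
end

section
/- Let H be the Hermitian adjacency matrix of a mixed graph on a finite nonempty vertex type V whose underlying graph G(H) is connected, and suppose H contains no imaginary mixed cycle: for every k ≥ 3 and every injective map c : ZMod k → V with H (c j) (c (j+1)) ≠ 0 for all j, the product ∏_{j ∈ ZMod k} H (c j) (c (j+1)) is a real number (equivalently, it lies in {1, −1}). Then there exists a symmetric matrix A : Matrix V V ℝ with A v v = 0 for all v, A u v ∈ {0, 1, −1} for all u v, and A u v ≠ 0 ↔ H u v ≠ 0, such that the characteristic polynomial of H equals the image under the map ℝ → ℂ of the characteristic polynomial of A (so H and A are cospectral). -/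
open Polynomial Filter

noncomputable def phc (z : ℂ) : ZMod 2 := if z = Complex.I ∨ z = -Complex.I then 1 else 0

@[simp] lemma phc_one : phc 1 = 0 := by unfold phc; norm_num [Complex.ext_iff]
@[simp] lemma phc_neg_one : phc (-1) = 0 := by unfold phc; norm_num [Complex.ext_iff]
@[simp] lemma phc_I : phc Complex.I = 1 := by unfold phc; simp
@[simp] lemma phc_neg_I : phc (-Complex.I) = 1 := by unfold phc; simp
@[simp] lemma phc_zero : phc 0 = 0 := by unfold phc; norm_num [Complex.ext_iff]

lemma phc_star (z : ℂ) : phc (star z) = phc z := by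
  unfold phc
  have h1 : (star z = Complex.I ∨ star z = -Complex.I) ↔ (z = Complex.I ∨ z = -Complex.I) := by
    constructor
    · rintro (h | h) <;> [right; left] <;>
        simpa [Complex.ext_iff] using congrArg star h
    · rintro (h | h) <;> subst h <;> simp [Complex.ext_iff]
  exact if_congr h1 rfl rfl

lemma prod_phase {ι : Type*} (s : Finset ι) (a : ι → ℂ)
    (h : ∀ j ∈ s, a j = 1 ∨ a j = Complex.I ∨ a j = -Complex.I) :
    (∏ j ∈ s, a j = 1 ∨ ∏ j ∈ s, a j = -1 ∨ ∏ j ∈ s, a j = Complex.I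
      ∨ ∏ j ∈ s, a j = -Complex.I) ∧
    phc (∏ j ∈ s, a j) = ∑ j ∈ s, phc (a j) := by
  classical
  induction s using Finset.induction_on with
  | empty => simp
  | @insert x s' hx ih =>
    have hx' := h x (Finset.mem_insert_self _ _)
    obtain ⟨hp, hs⟩ := ih (fun j hj => h j (Finset.mem_insert_of_mem hj))
    rw [Finset.prod_insert hx, Finset.sum_insert hx, ← hs]
    rcases hx' with h1 | h1 | h1 <;> rcases hp with h2 | h2 | h2 | h2 <;>
      rw [h1, h2] <;> constructor <;>
      simp [Complex.I_mul_I, mul_comm] <;> decide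

lemma closed_walk_sum {V : Type*} (H : Matrix V V ℂ) (hH : IsMixedAdj H)
    (hreal : ∀ (k : ℕ) (c : ZMod (k + 3) → V), Function.Injective c →
      (∀ j, H (c j) (c (j + 1)) ≠ 0) →
      ((∏ j : ZMod (k + 3), H (c j) (c (j + 1))) = 1 ∨
       (∏ j : ZMod (k + 3), H (c j) (c (j + 1))) = -1)) :
    ∀ (n : ℕ) (g : ℕ → V), (∀ i < n, H (g i) (g (i + 1)) ≠ 0) → g n = g 0 →
      ∑ i ∈ Finset.range n, phc (H (g i) (g (i + 1))) = 0 := by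
  intro n
  induction n using Nat.strong_induction_on with
  | _ n IH =>
  intro g hstep hclosed
  by_cases hinj : ∀ i < n, ∀ j < n, g i = g j → i = j
  · -- injective case
    match n, hstep, hclosed, hinj, IH with
    | 0, hstep, hclosed, hinj, IH => simp
    | 1, hstep, hclosed, hinj, IH =>
        exact absurd (by rw [show g 1 = g 0 from hclosed]; exact hH.1 (g 0))
          (hstep 0 (by norm_num))
    | 2, hstep, hclosed, hinj, IH =>
        have h21 : phc (H (g 1) (g 2)) = phc (H (g 0) (g 1)) := by
          rw [hclosed, hH.2.2 (g 1) (g 0), phc_star, hH.2.2 (g 0) (g 1), phc_star]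
        rw [Finset.sum_range_succ, Finset.sum_range_succ, Finset.sum_range_zero, h21,
          zero_add, CharTwo.add_self_eq_zero]
    | (k+3), hstep, hclosed, hinj, IH =>
        haveI : NeZero (k+3) := ⟨by omega⟩
        haveI : Fact (1 < k + 3) := ⟨by omega⟩
        set c : ZMod (k+3) → V := fun j => g j.val with hc
        have hcinj : Function.Injective c := by
          intro a b hab
          exact ZMod.val_injective _
            (hinj a.val (ZMod.val_lt a) b.val (ZMod.val_lt b) hab)
        have hsucc : ∀ j : ZMod (k+3), (j + 1).val = (j.val + 1) % (k+3) := by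
          intro j; rw [ZMod.val_add, ZMod.val_one]
        have hstep' : ∀ j : ZMod (k+3), H (c j) (c (j + 1)) ≠ 0 := by
          intro j
          rcases lt_or_ge (j.val + 1) (k+3) with hlt | hge
          · have : (j + 1).val = j.val + 1 := by rw [hsucc j, Nat.mod_eq_of_lt hlt]
            rw [hc]; simp only []
            rw [this]
            exact hstep j.val (ZMod.val_lt j)
          · have hj : j.val = k + 2 := by have := ZMod.val_lt j; omega
            have : (j + 1).val = 0 := by rw [hsucc j, hj]; simp
            rw [hc]; simp only []
            rw [this, hj, ← hclosed]
            exact hstep (k+2) (by omega)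
        have hmem : ∀ j ∈ Finset.univ, H (c j) (c (j + 1)) = 1 ∨
            H (c j) (c (j + 1)) = Complex.I ∨ H (c j) (c (j + 1)) = -Complex.I := by
          intro j _
          rcases hH.2.1 (c j) (c (j+1)) with h | h | h | h
          · exact absurd h (hstep' j)
          all_goals tauto
        obtain ⟨-, hphi⟩ := prod_phase Finset.univ (fun j : ZMod (k+3) => H (c j) (c (j+1))) hmem
        have hzero : ∑ j : ZMod (k+3), phc (H (c j) (c (j + 1))) = 0 := by
          rw [← hphi]
          rcases hreal k c hcinj hstep' with h | h <;> rw [h] <;> simp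
        rw [← hzero]
        -- reindex : sum over ZMod (k+3) = sum over range (k+3)
        rw [Finset.sum_nbij' (i := fun (j : ZMod (k+3)) => j.val)
            (j := fun (i : ℕ) => (i : ZMod (k+3)))
            (hi := fun j _ => Finset.mem_range.mpr (ZMod.val_lt j))
            (hj := fun i _ => Finset.mem_univ _)
            (left_neg := fun j _ => ZMod.natCast_rightInverse j)
            (right_neg := fun i hi => ZMod.val_cast_of_lt (Finset.mem_range.mp hi))
            (h := ?_)]
        intro j _
        have harg : c (j + 1) = g (j.val + 1) := by
          rcases lt_or_ge (j.val + 1) (k+3) with hlt | hge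
          · show g ((j+1).val) = g (j.val + 1)
            rw [hsucc j, Nat.mod_eq_of_lt hlt]
          · have hj : j.val = k + 2 := by have := ZMod.val_lt j; omega
            have h0 : (j + 1).val = 0 := by rw [hsucc j, hj]; simp
            show g ((j+1).val) = g (j.val + 1)
            rw [h0, hj, ← hclosed]
        rw [show c j = g j.val from rfl, harg]
  · -- duplicate case
    push_neg at hinj
    obtain ⟨i0, hi0, j0, hj0, heq0, hne0⟩ := hinj
    obtain ⟨i, j, hij, hjn, heq⟩ : ∃ i j, i < j ∧ j < n ∧ g i = g j := by
      rcases lt_or_gt_of_ne hne0 with h | h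
      · exact ⟨i0, j0, h, hj0, heq0⟩
      · exact ⟨j0, i0, h, hi0, heq0.symm⟩
    set F : ℕ → ZMod 2 := fun t => phc (H (g t) (g (t + 1))) with hF
    -- walk 1
    have h1 : ∑ s ∈ Finset.range (j - i), F (i + s) = 0 := by
      have := IH (j - i) (by omega) (fun t => g (i + t))
        (fun t ht => by
          have : i + t < n := by omega
          exact hstep (i + t) this)
        (by show g (i + (j - i)) = g (i + 0)
            have : i + (j - i) = j := by omega
            rw [this, Nat.add_zero]; exact heq.symm)
      rw [hF]; simpa [add_assoc] using this
    -- walk 2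
    set m := n - (j - i) with hm
    set g2 : ℕ → V := fun t => if t ≤ i then g t else g (t + (j - i)) with hg2
    have hmi : i < m := by omega
    have g2le : ∀ t, t ≤ i → g2 t = g t := by
      intro t h; simp only [hg2]; exact if_pos h
    have g2gt : ∀ t a, i < t → t + (j - i) = a → g2 t = g a := by
      intro t a h ha; simp only [hg2]; rw [if_neg (by omega), ha]
    have h2 : ∑ t ∈ Finset.range m, phc (H (g2 t) (g2 (t + 1))) = 0 := by
      apply IH m (by omega) g2
      · intro t ht
        rcases lt_trichotomy t i with h | h | h
        · rw [g2le t (le_of_lt h), g2le (t+1) (by omega)]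
          exact hstep t (by omega)
        · subst h
          rw [g2le t le_rfl, g2gt (t+1) (j+1) (by omega) (by omega), heq]
          exact hstep j (by omega)
        · rw [g2gt t (t + (j-i)) h rfl, g2gt (t+1) (t + (j-i) + 1) (by omega) (by omega)]
          exact hstep (t + (j - i)) (by omega)
      · rw [g2gt m n (by omega) (by omega), g2le 0 (by omega), hclosed]
    -- rewrite h2 pieces
    have h2' : (∑ t ∈ Finset.range i, F t) + F j
        + ∑ t ∈ Finset.Ico (j + 1) n, F t = 0 := by
      rw [← h2]
      have split1 : ∑ t ∈ Finset.range m, phc (H (g2 t) (g2 (t + 1)))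
          = (∑ t ∈ Finset.range (i+1), phc (H (g2 t) (g2 (t + 1))))
            + ∑ t ∈ Finset.Ico (i+1) m, phc (H (g2 t) (g2 (t + 1))) := by
        rw [Finset.range_eq_Ico, Finset.range_eq_Ico]
        exact (Finset.sum_Ico_consecutive (fun t => phc (H (g2 t) (g2 (t + 1)))) (show 0 ≤ i + 1 by omega) (show i + 1 ≤ m by omega)).symm
      rw [split1, Finset.sum_range_succ]
      congr 1
      congr 1
      · apply Finset.sum_congr rfl
        intro t ht
        have ht' := Finset.mem_range.mp ht
        rw [hF, g2le t (le_of_lt ht'), g2le (t+1) (by omega)]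
      · rw [hF, g2le i le_rfl, g2gt (i+1) (j+1) (by omega) (by omega), heq]
      · rw [Finset.sum_Ico_eq_sum_range, Finset.sum_Ico_eq_sum_range]
        have hlen : n - (j + 1) = m - (i + 1) := by omega
        rw [hlen]
        apply Finset.sum_congr rfl
        intro s hs
        have hs' := Finset.mem_range.mp hs
        rw [hF, g2gt (i+1+s) (j+1+s) (by omega) (by omega),
          g2gt (i+1+s+1) (j+1+s+1) (by omega) (by omega)]
    -- final assembly
    have h1' : ∑ t ∈ Finset.Ico i j, F t = 0 := by
      rw [Finset.sum_Ico_eq_sum_range]; exact h1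
    have splitAll : ∑ t ∈ Finset.range n, F t
        = (∑ t ∈ Finset.range i, F t) + (∑ t ∈ Finset.Ico i j, F t)
          + (F j + ∑ t ∈ Finset.Ico (j + 1) n, F t) := by
      rw [Finset.range_eq_Ico,
        ← Finset.sum_Ico_consecutive F (show (0:ℕ) ≤ j by omega) (show j ≤ n by omega),
        ← Finset.sum_Ico_consecutive F (show (0:ℕ) ≤ i by omega) (show i ≤ j by omega),
        Finset.sum_eq_sum_Ico_succ_bot (show j < n by omega) F, ← Finset.range_eq_Ico]
    rw [splitAll, h1', add_zero, ← add_assoc]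
    exact h2'

lemma charpoly_diag_conj {V : Type*} [Fintype V] [DecidableEq V] (d : V → ℂ)
    (hd : ∀ v, star (d v) * d v = 1) (M : Matrix V V ℂ) :
    (Matrix.diagonal (fun v => star (d v)) * M * Matrix.diagonal d).charpoly = M.charpoly := by
  unfold Matrix.charpoly
  have key : Matrix.charmatrix (Matrix.diagonal (fun v => star (d v)) * M * Matrix.diagonal d)
      = Matrix.diagonal (fun v => Polynomial.C (star (d v))) * Matrix.charmatrix M
        * Matrix.diagonal (fun v => Polynomial.C (d v)) := by
    refine Matrix.ext fun u v => ?_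
    rw [Matrix.charmatrix_apply, Matrix.mul_diagonal, Matrix.diagonal_mul,
      Matrix.mul_diagonal, Matrix.diagonal_mul, Matrix.charmatrix_apply]
    by_cases h : u = v
    · subst h
      have h1 : (Polynomial.C (star (d u)) * Polynomial.C (d u) : Polynomial ℂ) = 1 := by
        rw [← map_mul, hd, map_one]
      simp only [Matrix.diagonal_apply_eq]
      rw [map_mul, map_mul]
      linear_combination (-(X : Polynomial ℂ)) * h1
    · simp only [Matrix.diagonal_apply_ne _ h]
      rw [map_mul, map_mul]
      ring
  rw [key, Matrix.det_mul, Matrix.det_mul, Matrix.det_diagonal, Matrix.det_diagonal]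
  have : (∏ v, Polynomial.C (star (d v))) * Matrix.det (Matrix.charmatrix M)
      * ∏ v, Polynomial.C (d v)
      = (∏ v, (Polynomial.C (star (d v)) * Polynomial.C (d v))) * Matrix.det (Matrix.charmatrix M) := by
    rw [Finset.prod_mul_distrib]; ring
  rw [this]
  have : ∀ v ∈ Finset.univ, (Polynomial.C (star (d v)) * Polynomial.C (d v) : Polynomial ℂ) = 1 := by
    intro v _; rw [← map_mul, hd, map_one]
  rw [Finset.prod_congr rfl this, Finset.prod_const_one, one_mul]

/-- a mixed graph without imaginary cycles is cospectral to a signed graph. -/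
theorem stmt3 {V : Type*} [Fintype V] [DecidableEq V] [Nonempty V]
    (H : Matrix V V ℂ) (hH : IsMixedAdj H)
    (hconn : (underGraph H).Connected)
    (hreal : ∀ (k : ℕ) (c : ZMod (k + 3) → V), Function.Injective c →
      (∀ j, H (c j) (c (j + 1)) ≠ 0) →
      ((∏ j : ZMod (k + 3), H (c j) (c (j + 1))) = 1 ∨
       (∏ j : ZMod (k + 3), H (c j) (c (j + 1))) = -1)) :
    ∃ A : Matrix V V ℝ, A.IsSymm ∧ (∀ v, A v v = 0) ∧
      (∀ u v, A u v = 0 ∨ A u v = 1 ∨ A u v = -1) ∧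
      (∀ u v, A u v ≠ 0 ↔ H u v ≠ 0) ∧
      H.charpoly = A.charpoly.map (algebraMap ℝ ℂ) := by
  classical
  obtain ⟨hdiag, hval, hherm⟩ := hH
  have hzmod2 : ∀ x : ZMod 2, x = 0 ∨ x = 1 := by decide
  have hadj : ∀ u v, (underGraph H).Adj u v ↔ H u v ≠ 0 := by
    intro u v
    constructor
    · rintro ⟨hne, h | h⟩
      · exact h
      · intro h0
        apply h
        rw [hherm v u, h0, star_zero]
    · intro h
      refine ⟨?_, Or.inl h⟩
      rintro rfl
      exact h (hdiag u)
  set G := underGraph H with hG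
  obtain ⟨r₀⟩ := ‹Nonempty V›
  have hreach : ∀ v, Nonempty (G.Walk r₀ v) := fun v => hconn.preconnected r₀ v
  set p : ∀ v, G.Walk r₀ v := fun v => (hreach v).some with hpdef
  have walkstep : ∀ (u v : V) (w : G.Walk u v) (i : ℕ), i < w.length →
      H (w.getVert i) (w.getVert (i + 1)) ≠ 0 := by
    intro u v w i hi
    exact (hadj _ _).mp (w.adj_getVert_succ hi)
  set f : V → ZMod 2 := fun v => ∑ i ∈ Finset.range (p v).length,
      phc (H ((p v).getVert i) ((p v).getVert (i + 1))) with hfdef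
  have hphc_symm : ∀ u v, phc (H u v) = phc (H v u) := by
    intro u v; rw [hherm u v, phc_star]
  have hf : ∀ u v, H u v ≠ 0 → phc (H u v) = f u + f v := by
    intro u v huv
    set L1 := (p u).length with hL1
    set L2 := (p v).length with hL2
    set n := L1 + 1 + L2 with hn
    set g : ℕ → V := fun t => if t ≤ L1 then (p u).getVert t
      else (p v).getVert (n - t) with hg
    have gle : ∀ t, t ≤ L1 → g t = (p u).getVert t := by
      intro t h; simp only [hg]; exact if_pos h
    have ggt : ∀ t, L1 < t → g t = (p v).getVert (n - t) := by
      intro t h; simp only [hg]; exact if_neg (by omega)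
    have hstepg : ∀ i < n, H (g i) (g (i + 1)) ≠ 0 := by
      intro i hi
      rcases lt_trichotomy i L1 with h | h | h
      · rw [gle i (le_of_lt h), gle (i+1) (by omega)]
        exact walkstep _ _ (p u) i h
      · rw [gle i (le_of_eq h), ggt (i+1) (by omega)]
        have e1 : (p u).getVert L1 = u := SimpleGraph.Walk.getVert_length (p u)
        have e2 : n - (i + 1) = L2 := by omega
        have ev : (p v).getVert L2 = v := SimpleGraph.Walk.getVert_length (p v)
        rw [e2, h, e1, ev]
        exact huv
      · rw [ggt i h, ggt (i+1) (by omega)]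
        have h1 : n - i - 1 < L2 := by omega
        have h2 : n - i = (n - i - 1) + 1 := by omega
        have := walkstep _ _ (p v) (n - i - 1) h1
        rw [h2, show n - (i+1) = n - i - 1 from by omega]
        intro h0
        apply this
        rw [hherm ((p v).getVert (n - i - 1)) ((p v).getVert (n - i - 1 + 1)), h0, star_zero]
    have hclosedg : g n = g 0 := by
      rw [ggt n (by omega), gle 0 (by omega), Nat.sub_self,
        SimpleGraph.Walk.getVert_zero, SimpleGraph.Walk.getVert_zero]
    have hkey := closed_walk_sum H ⟨hdiag, hval, hherm⟩ hreal n g hstepg hclosedg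
    -- split the sum
    have splitAll : ∑ i ∈ Finset.range n, phc (H (g i) (g (i + 1)))
        = (∑ i ∈ Finset.range L1, phc (H (g i) (g (i + 1))))
          + (phc (H (g L1) (g (L1 + 1)))
            + ∑ i ∈ Finset.Ico (L1 + 1) n, phc (H (g i) (g (i + 1)))) := by
      rw [Finset.range_eq_Ico,
        ← Finset.sum_Ico_consecutive _ (show (0:ℕ) ≤ L1 by omega) (show L1 ≤ n by omega),
        Finset.sum_eq_sum_Ico_succ_bot (show L1 < n by omega), ← Finset.range_eq_Ico]
    have e1 : ∑ i ∈ Finset.range L1, phc (H (g i) (g (i + 1))) = f u := by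
      have hfu : f u = ∑ i ∈ Finset.range L1,
          phc (H ((p u).getVert i) ((p u).getVert (i + 1))) := rfl
      rw [hfu]
      apply Finset.sum_congr rfl
      intro t ht
      have ht' := Finset.mem_range.mp ht
      rw [gle t (le_of_lt ht'), gle (t+1) (by omega)]
    have e2 : phc (H (g L1) (g (L1 + 1))) = phc (H u v) := by
      rw [gle L1 le_rfl, ggt (L1+1) (by omega)]
      have eu : (p u).getVert L1 = u := SimpleGraph.Walk.getVert_length (p u)
      have ev : n - (L1 + 1) = L2 := by omega
      have ev2 : (p v).getVert L2 = v := SimpleGraph.Walk.getVert_length (p v)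
      rw [eu, ev, ev2]
    have e3 : ∑ i ∈ Finset.Ico (L1 + 1) n, phc (H (g i) (g (i + 1))) = f v := by
      rw [Finset.sum_Ico_eq_sum_range]
      have hlen : n - (L1 + 1) = L2 := by omega
      rw [hlen]
      have term : ∀ s ∈ Finset.range L2, phc (H (g (L1 + 1 + s)) (g (L1 + 1 + s + 1)))
          = phc (H ((p v).getVert (L2 - 1 - s)) ((p v).getVert (L2 - 1 - s + 1))) := by
        intro s hs
        have hs' := Finset.mem_range.mp hs
        rw [ggt (L1+1+s) (by omega), ggt (L1+1+s+1) (by omega),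
          show n - (L1+1+s) = L2 - s from by omega,
          show n - (L1+1+s+1) = L2 - 1 - s from by omega,
          show L2 - s = (L2 - 1 - s) + 1 from by omega]
        rw [hphc_symm]
      rw [Finset.sum_congr rfl term, Finset.sum_range_reflect
        (fun s => phc (H ((p v).getVert s) ((p v).getVert (s + 1)))) L2]
    rw [splitAll, e1, e2, e3] at hkey
    revert hkey
    generalize f u = a
    generalize f v = b
    generalize phc (H u v) = c
    revert a b c
    decide
  -- the gauge
  set d : V → ℂ := fun v => if f v = 0 then 1 else Complex.I with hddef
  have hd_unit : ∀ v, star (d v) * d v = 1 := by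
    intro v
    rw [hddef]
    by_cases h : f v = 0 <;> simp [h, Complex.star_def, Complex.conj_I]
  have entry : ∀ u v, (star (d u) * H u v * d v = 0 ∧ H u v = 0) ∨
      (star (d u) * H u v * d v = 1 ∧ H u v ≠ 0) ∨
      (star (d u) * H u v * d v = -1 ∧ H u v ≠ 0) := by
    intro u v
    rcases hval u v with h | h | h | h
    · left; rw [h]; exact ⟨by ring, rfl⟩
    · have hne' : H u v ≠ 0 := by rw [h]; exact one_ne_zero
      have hfe : f u + f v = 0 := by rw [← hf u v hne', h]; simp
      have hfuv : f u = f v := by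
        rcases hzmod2 (f u) with h1 | h1 <;> rcases hzmod2 (f v) with h2 | h2 <;>
          rw [h1, h2] at hfe ⊢ <;> first | rfl | (exfalso; revert hfe; decide)
      have hdd : d u = d v := by rw [hddef]; simp only [hfuv]
      right; left
      refine ⟨?_, hne'⟩
      rw [h, mul_one, hdd, hd_unit v]
    · have hne' : H u v ≠ 0 := by rw [h]; exact Complex.I_ne_zero
      have hfe : f u + f v = 1 := by rw [← hf u v hne', h]; simp
      rcases hzmod2 (f u) with h1 | h1 <;> rcases hzmod2 (f v) with h2 | h2
      · exfalso; rw [h1, h2] at hfe; revert hfe; decide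
      · -- f u = 0, f v = 1 : d u = 1, d v = I : 1 * I * I = -1
        right; right
        refine ⟨?_, hne'⟩
        rw [h]
        simp [hddef, h1, h2, Complex.star_def, Complex.conj_I, Complex.I_mul_I]
      · -- f u = 1, f v = 0 : d u = I, d v = 1 : (-I) * I * 1 = 1
        right; left
        refine ⟨?_, hne'⟩
        rw [h]
        simp [hddef, h1, h2, Complex.star_def, Complex.conj_I, Complex.I_mul_I]
      · exfalso; rw [h1, h2] at hfe; revert hfe; decide
    · have hne' : H u v ≠ 0 := by rw [h]; exact neg_ne_zero.mpr Complex.I_ne_zero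
      have hfe : f u + f v = 1 := by rw [← hf u v hne', h]; simp
      rcases hzmod2 (f u) with h1 | h1 <;> rcases hzmod2 (f v) with h2 | h2
      · exfalso; rw [h1, h2] at hfe; revert hfe; decide
      · right; left
        refine ⟨?_, hne'⟩
        rw [h]
        simp [hddef, h1, h2, Complex.star_def, Complex.conj_I, Complex.I_mul_I]
      · right; right
        refine ⟨?_, hne'⟩
        rw [h]
        simp [hddef, h1, h2, Complex.star_def, Complex.conj_I, Complex.I_mul_I]
      · exfalso; rw [h1, h2] at hfe; revert hfe; decide
  set A : Matrix V V ℝ := Matrix.of fun u v => (star (d u) * H u v * d v).re with hAdef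
  have hAval : ∀ u v, A u v = (star (d u) * H u v * d v).re := fun u v => rfl
  have hAC : ∀ u v, ((A u v : ℝ) : ℂ) = star (d u) * H u v * d v := by
    intro u v
    rcases entry u v with ⟨h, -⟩ | ⟨h, -⟩ | ⟨h, -⟩ <;> rw [hAval, h] <;> simp
  refine ⟨A, ?_, ?_, ?_, ?_, ?_⟩
  · -- symmetric
    apply Matrix.IsSymm.ext
    intro u v
    rw [hAval, hAval]
    have : star (d v) * H v u * d u = star (star (d u) * H u v * d v) := by
      rw [hherm v u]
      simp only [star_mul, star_star]
      ring
    rw [this]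
    simp only [Complex.star_def, Complex.mul_re, Complex.conj_re, Complex.conj_im]
  · intro v
    rw [hAval, hdiag]
    simp
  · intro u v
    rcases entry u v with ⟨h, -⟩ | ⟨h, -⟩ | ⟨h, -⟩ <;> rw [hAval, h] <;> simp
  · intro u v
    constructor
    · intro hA0 hH0
      apply hA0
      rw [hAval, hH0]
      simp
    · intro hH0
      rcases entry u v with ⟨-, h⟩ | ⟨h, -⟩ | ⟨h, -⟩
      · exact absurd h hH0
      · rw [hAval, h]; norm_num
      · rw [hAval, h]; norm_num
  · -- charpoly
    have hmap : A.map (algebraMap ℝ ℂ)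
        = Matrix.diagonal (fun v => star (d v)) * H * Matrix.diagonal d := by
      ext u v
      rw [Matrix.map_apply, Matrix.mul_diagonal, Matrix.diagonal_mul]
      exact hAC u v
    calc H.charpoly
        = (Matrix.diagonal (fun v => star (d v)) * H * Matrix.diagonal d).charpoly :=
          (charpoly_diag_conj d hd_unit H).symm
      _ = (A.map (algebraMap ℝ ℂ)).charpoly := by rw [hmap]
      _ = A.charpoly.map (algebraMap ℝ ℂ) := Matrix.charpoly_map A _
end

section
/- For n ≥ 4, the characteristic polynomial of the Hermitian adjacency matrix of C'_{n−1,n} satisfies the identity charpoly(C'_{n−1,n}) = X · (X · p_{n−2} − 2 · p_{n−3}) − p_{n−2} in ℂ[X], where p_m denotes the characteristic polynomial of the adjacency matrix of the path graph on m vertices, with p_0 = 1. -/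
open Polynomial Filter

noncomputable section AuxSect

def pathF : ℕ → ℕ → Polynomial ℂ := fun a b =>
  if a = b then X else if a + 1 = b ∨ b + 1 = a then -1 else 0

lemma pPoly_eq (m : ℕ) :
    pPoly m = (Matrix.of fun i j : Fin m => pathF (i : ℕ) (j : ℕ)).det := by
  unfold pPoly Matrix.charpoly
  congr 1
  ext i j
  rcases eq_or_ne i j with rfl | h
  · simp [pathF, Matrix.charmatrix_apply_eq, pathAdj]
  · have hv : (i : ℕ) ≠ (j : ℕ) := fun hh => h (Fin.ext hh)
    simp only [Matrix.charmatrix_apply_ne _ _ _ h, pathAdj, pathF, Matrix.of_apply, hv, if_false]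
    split_ifs <;> simp

lemma val_succAbove {n : ℕ} (p : Fin (n+1)) (i : Fin n) :
    ((p.succAbove i : Fin (n+1)) : ℕ) = if (i : ℕ) < (p : ℕ) then (i : ℕ) else (i : ℕ) + 1 := by
  rw [Fin.succAbove]
  have : (i.castSucc < p) ↔ ((i:ℕ) < (p:ℕ)) := by
    rw [Fin.lt_def]; rfl
  split_ifs with h1 h2 h2
  · rfl
  · exact absurd (this.mp h1) h2
  · exact absurd (this.mpr h2) h1
  · rfl



def cpF (n : ℕ) : ℕ → ℕ → Polynomial ℂ := fun a b =>
  if a = b then X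
  else if (a+1 = b ∧ b ≤ n-2) ∨ (b+1 = a ∧ a ≤ n-2) ∨ (a = 0 ∧ b = n-1) ∨ (b = 0 ∧ a = n-1) then -1
  else if a = n-2 ∧ b = 0 then -(C Complex.I)
  else if a = 0 ∧ b = n-2 then C Complex.I
  else 0

lemma cp_entry (n : ℕ) (hn : 4 ≤ n) (i j : Fin n) :
    CpPend n i j =
      if (i:ℕ)+1 = j ∧ (j:ℕ) ≤ n-2 ∨ (j:ℕ)+1 = i ∧ (i:ℕ) ≤ n-2 ∨ (i:ℕ) = 0 ∧ (j:ℕ) = n-1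
          ∨ (j:ℕ) = 0 ∧ (i:ℕ) = n-1 then 1
      else if (i:ℕ) = n-2 ∧ (j:ℕ) = 0 then Complex.I
      else if (i:ℕ) = 0 ∧ (j:ℕ) = n-2 then -Complex.I
      else 0 := by
  have hi := i.isLt
  have hj := j.isLt
  set a := (i:ℕ) with ha
  set b := (j:ℕ) with hb
  show (if a + 1 = b ∧ b ≤ n - 2 then (1:ℂ)
      else if a = n - 2 ∧ b = 0 then Complex.I
      else if a = 0 ∧ b = n - 1 then 1 else 0)
    + star (if b + 1 = a ∧ a ≤ n - 2 then (1:ℂ)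
      else if b = n - 2 ∧ a = 0 then Complex.I
      else if b = 0 ∧ a = n - 1 then 1 else 0) = _
  by_cases h1 : a + 1 = b ∧ b ≤ n - 2
  · rw [if_pos h1, if_neg (by omega), if_neg (by omega), if_neg (by omega),
      if_pos (Or.inl h1)]
    simp
  by_cases h2 : b + 1 = a ∧ a ≤ n - 2
  · rw [if_neg h1, if_neg (by omega), if_neg (by omega), if_pos h2,
      if_pos (Or.inr (Or.inl h2))]
    simp
  by_cases h3 : a = 0 ∧ b = n - 1
  · rw [if_neg h1, if_neg (by omega), if_pos h3, if_neg h2, if_neg (by omega),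
      if_neg (by omega), if_pos (Or.inr (Or.inr (Or.inl h3)))]
    simp
  by_cases h4 : b = 0 ∧ a = n - 1
  · rw [if_neg h1, if_neg (by omega), if_neg (by omega), if_neg h2, if_neg (by omega),
      if_pos h4, if_pos (Or.inr (Or.inr (Or.inr h4)))]
    simp
  have hbig : ¬(a + 1 = b ∧ b ≤ n - 2 ∨ b + 1 = a ∧ a ≤ n - 2 ∨ a = 0 ∧ b = n - 1
      ∨ b = 0 ∧ a = n - 1) := by tauto
  by_cases h5 : a = n - 2 ∧ b = 0
  · rw [if_neg h1, if_pos h5, if_neg h2, if_neg (by omega), if_neg (by omega), if_neg hbig,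
      if_pos h5]
    simp
  by_cases h6 : a = 0 ∧ b = n - 2
  · rw [if_neg h1, if_neg (by omega), if_neg h3, if_neg h2, if_pos ⟨h6.2, h6.1⟩, if_neg hbig,
      if_neg h5, if_pos h6]
    simp [Complex.conj_I]
  rw [if_neg h1, if_neg h5, if_neg h3, if_neg h2, if_neg (by tauto), if_neg h4,
    if_neg hbig, if_neg h5, if_neg h6]
  simp

lemma charm_cp (n : ℕ) (hn : 4 ≤ n) :
    Matrix.charmatrix (CpPend n) = Matrix.of fun i j : Fin n => cpF n (i : ℕ) (j : ℕ) := by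
  ext i j
  have hi := i.isLt
  have hj := j.isLt
  rcases eq_or_ne i j with rfl | h
  · have h0 : CpPend n i i = 0 := by
      rw [cp_entry n hn, if_neg (by omega), if_neg (by omega), if_neg (by omega)]
    simp [Matrix.charmatrix_apply_eq, h0, cpF]
  · have hv : (i : ℕ) ≠ (j : ℕ) := fun hh => h (Fin.ext hh)
    rw [Matrix.charmatrix_apply_ne _ _ _ h, cp_entry n hn]
    simp only [Matrix.of_apply, cpF, hv, if_false]
    split_ifs <;> simp

lemma sum_two {M : Type*} [AddCommMonoid M] {n : ℕ} (f : Fin n → M) (a b : Fin n)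
    (hab : a ≠ b) (h0 : ∀ x, x ≠ a → x ≠ b → f x = 0) :
    ∑ x, f x = f a + f b := by
  rw [← Finset.sum_subset (Finset.subset_univ {a, b})
    (fun x _ hx => h0 x (by simp_all) (by simp_all))]
  rw [Finset.sum_insert (by simp [hab]), Finset.sum_singleton]

lemma sum_three {M : Type*} [AddCommMonoid M] {n : ℕ} (f : Fin n → M) (a b c : Fin n)
    (hab : a ≠ b) (hac : a ≠ c) (hbc : b ≠ c)
    (h0 : ∀ x, x ≠ a → x ≠ b → x ≠ c → f x = 0) :
    ∑ x, f x = f a + f b + f c := by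
  rw [← Finset.sum_subset (Finset.subset_univ {a, b, c})
    (fun x _ hx => h0 x (by simp_all) (by simp_all) (by simp_all))]
  rw [Finset.sum_insert (by simp [hab, hac]), Finset.sum_insert (by simp [hbc]),
    Finset.sum_singleton, add_assoc]

lemma cpF_path (m t : ℕ) (ht : 1 ≤ t) (a b : ℕ) (ha : a + t ≤ m + 2) (hb : b + t ≤ m + 2) :
    cpF (m + 4) (a + t) (b + t) = pathF a b := by
  unfold cpF pathF
  split_ifs <;> first | rfl | omega | (exfalso; omega)

lemma detQ (m : ℕ) :
    (Matrix.of fun i j : Fin (m+1) => cpF (m+4) ((i:ℕ)+2) ((j:ℕ)+1)).det = (-1)^(m+1) := by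
  rw [Matrix.det_of_upperTriangular]
  · have : ∀ i : Fin (m+1), cpF (m+4) ((i:ℕ)+2) ((i:ℕ)+1) = -1 := by
      intro i
      have := i.isLt
      unfold cpF
      rw [if_neg (by omega), if_pos (by omega)]
    simp only [Matrix.of_apply, this, Finset.prod_const, Finset.card_univ, Fintype.card_fin]
  · intro i j hij
    have hi := i.isLt
    have hj := j.isLt
    have : (j:ℕ) < (i:ℕ) := hij
    simp only [Matrix.of_apply]
    unfold cpF
    rw [if_neg (by omega), if_neg (by omega), if_neg (by omega), if_neg (by omega)]

lemma detR (m : ℕ) :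
    (Matrix.of fun i j : Fin (m+1) => cpF (m+4) ((i:ℕ)+1) ((j:ℕ)+2)).det = (-1)^(m+1) := by
  rw [Matrix.det_of_lowerTriangular]
  · have : ∀ i : Fin (m+1), cpF (m+4) ((i:ℕ)+1) ((i:ℕ)+2) = -1 := by
      intro i
      have := i.isLt
      unfold cpF
      rw [if_neg (by omega), if_pos (by omega)]
    simp only [Matrix.of_apply, this, Finset.prod_const, Finset.card_univ, Fintype.card_fin]
  · intro i j hij
    have hi := i.isLt
    have hj := j.isLt
    have : (i:ℕ) < (j:ℕ) := hij
    simp only [Matrix.of_apply]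
    unfold cpF
    rw [if_neg (by omega), if_neg (by omega), if_neg (by omega), if_neg (by omega)]

lemma pPoly_of (sz t : ℕ) {m : ℕ} (ht : 1 ≤ t) (hst : sz + t ≤ m + 3) :
    (Matrix.of fun i j : Fin sz => cpF (m+4) ((i:ℕ)+t) ((j:ℕ)+t)).det = pPoly sz := by
  rw [pPoly_eq]
  congr 1
  refine Matrix.ext fun i j => ?_
  have hi := i.isLt
  have hj := j.isLt
  simp only [Matrix.of_apply]
  exact cpF_path m t ht i j (by omega) (by omega)

lemma detN (m : ℕ) :
    (Matrix.of fun i j : Fin (m+2) =>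
        cpF (m+4) (if (i:ℕ) < 1 then (i:ℕ) else (i:ℕ)+1) ((j:ℕ)+1)).det
      = -(pPoly (m+1)) + C Complex.I := by
  set A := (Matrix.of fun i j : Fin (m+2) =>
      cpF (m+4) (if (i:ℕ) < 1 then (i:ℕ) else (i:ℕ)+1) ((j:ℕ)+1)) with hA
  have hrow : ∀ j : Fin (m+2), A 0 j = cpF (m+4) 0 ((j:ℕ)+1) := by
    intro j
    simp [hA]
  rw [Matrix.det_succ_row_zero]
  rw [sum_two _ 0 (Fin.last (m+1))
    (by
      intro h
      have := congrArg Fin.val h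
      simp [Fin.val_last] at this)
    (by
      intro x hx0 hxl
      have h1 : (x:ℕ) ≠ 0 := fun h => hx0 (Fin.ext h)
      have h2 : (x:ℕ) ≠ m+1 := fun h => hxl (Fin.ext (by simp [Fin.val_last, h]))
      have := x.isLt
      have hz : cpF (m+4) 0 ((x:ℕ)+1) = 0 := by
        unfold cpF
        rw [if_neg (by omega), if_neg (by omega), if_neg (by omega), if_neg (by omega)]
      rw [hrow x, hz, mul_zero, zero_mul])]
  have e0 : cpF (m+4) 0 (((0 : Fin (m+2)):ℕ)+1) = -1 := by
    rw [Fin.val_zero]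
    unfold cpF
    rw [if_neg (by omega), if_pos (by omega)]
  have el : cpF (m+4) 0 (((Fin.last (m+1)):ℕ)+1) = C Complex.I := by
    rw [Fin.val_last]
    unfold cpF
    rw [if_neg (by omega), if_neg (by omega), if_neg (by omega), if_pos (by omega)]
  have m0 : (A.submatrix Fin.succ (Fin.succAbove 0)).det = pPoly (m+1) := by
    rw [Fin.succAbove_zero, ← pPoly_of (m+1) 2 (m := m) (by omega) (by omega)]
    congr 1
  have ml : (A.submatrix Fin.succ (Fin.succAbove (Fin.last (m+1)))).det = (-1)^(m+1) := by
    rw [Fin.succAbove_last, ← detQ m]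
    congr 1
  rw [hrow 0, hrow (Fin.last (m+1)), e0, el, m0, ml, Fin.val_zero, Fin.val_last, pow_zero]
  have : (-1 : Polynomial ℂ)^(m+1) * C Complex.I * (-1)^(m+1) = C Complex.I := by
    rw [mul_comm ((-1 : Polynomial ℂ)^(m+1)), mul_assoc, ← pow_add]
    rw [Even.neg_one_pow ⟨m+1, by ring⟩, mul_one]
  rw [this]
  ring

lemma detP (m : ℕ) :
    (Matrix.of fun i j : Fin (m+2) => cpF (m+4) (i:ℕ) ((j:ℕ)+1)).det
      = (-1)^(m+2) + (-1)^(m+1) * C Complex.I * pPoly (m+1) := by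
  set A := (Matrix.of fun i j : Fin (m+2) => cpF (m+4) (i:ℕ) ((j:ℕ)+1)) with hA
  have hrow : ∀ j : Fin (m+2), A 0 j = cpF (m+4) 0 ((j:ℕ)+1) := by
    intro j
    simp [hA]
  rw [Matrix.det_succ_row_zero]
  rw [sum_two _ 0 (Fin.last (m+1))
    (by
      intro h
      have := congrArg Fin.val h
      simp [Fin.val_last] at this)
    (by
      intro x hx0 hxl
      have h1 : (x:ℕ) ≠ 0 := fun h => hx0 (Fin.ext h)
      have h2 : (x:ℕ) ≠ m+1 := fun h => hxl (Fin.ext (by simp [Fin.val_last, h]))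
      have := x.isLt
      have hz : cpF (m+4) 0 ((x:ℕ)+1) = 0 := by
        unfold cpF
        rw [if_neg (by omega), if_neg (by omega), if_neg (by omega), if_neg (by omega)]
      rw [hrow x, hz, mul_zero, zero_mul])]
  have e0 : cpF (m+4) 0 (((0 : Fin (m+2)):ℕ)+1) = -1 := by
    rw [Fin.val_zero]
    unfold cpF
    rw [if_neg (by omega), if_pos (by omega)]
  have el : cpF (m+4) 0 (((Fin.last (m+1)):ℕ)+1) = C Complex.I := by
    rw [Fin.val_last]
    unfold cpF
    rw [if_neg (by omega), if_neg (by omega), if_neg (by omega), if_pos (by omega)]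
  have m0 : (A.submatrix Fin.succ (Fin.succAbove 0)).det = (-1)^(m+1) := by
    rw [Fin.succAbove_zero, ← detR m]
    congr 1
  have ml : (A.submatrix Fin.succ (Fin.succAbove (Fin.last (m+1)))).det = pPoly (m+1) := by
    rw [Fin.succAbove_last, ← pPoly_of (m+1) 1 (m := m) (by omega) (by omega)]
    congr 1
  rw [hrow 0, hrow (Fin.last (m+1)), e0, el, m0, ml, Fin.val_zero, Fin.val_last, pow_zero]
  ring

lemma detB (m : ℕ) :
    (Matrix.of fun i j : Fin (m+3) => cpF (m+4) (i:ℕ) (j:ℕ)).det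
      = X * pPoly (m+2) - 2 * pPoly (m+1) := by
  set B := (Matrix.of fun i j : Fin (m+3) => cpF (m+4) (i:ℕ) (j:ℕ)) with hB
  have hcol : ∀ i : Fin (m+3), B i 0 = cpF (m+4) (i:ℕ) 0 := by
    intro i
    simp [hB]
  rw [Matrix.det_succ_column_zero]
  rw [sum_three _ 0 1 (Fin.last (m+2))
    (by
      intro h
      have := congrArg Fin.val h
      simp [Fin.val_one] at this)
    (by
      intro h
      have := congrArg Fin.val h
      simp [Fin.val_last] at this)
    (by
      intro h
      have := congrArg Fin.val h
      simp [Fin.val_one, Fin.val_last] at this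
      )
    (by
      intro x hx0 hx1 hxl
      have h1 : (x:ℕ) ≠ 0 := fun h => hx0 (Fin.ext h)
      have h2 : (x:ℕ) ≠ 1 := fun h => hx1 (Fin.ext (by rw [h, Fin.val_one]))
      have h3 : (x:ℕ) ≠ m+2 := fun h => hxl (Fin.ext (by rw [h, Fin.val_last]))
      have := x.isLt
      have hz : cpF (m+4) (x:ℕ) 0 = 0 := by
        unfold cpF
        rw [if_neg (by omega), if_neg (by omega), if_neg (by omega), if_neg (by omega)]
      rw [hcol x, hz, mul_zero, zero_mul])]
  have e0 : cpF (m+4) (((0 : Fin (m+3)):ℕ)) 0 = X := by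
    rw [Fin.val_zero]
    unfold cpF
    rw [if_pos rfl]
  have e1 : cpF (m+4) (((1 : Fin (m+3)):ℕ)) 0 = -1 := by
    rw [Fin.val_one]
    unfold cpF
    rw [if_neg (by omega), if_pos (by omega)]
  have el : cpF (m+4) (((Fin.last (m+2)):ℕ)) 0 = -(C Complex.I) := by
    rw [Fin.val_last]
    unfold cpF
    rw [if_neg (by omega), if_neg (by omega), if_pos (by omega)]
  have m0 : (B.submatrix (Fin.succAbove 0) Fin.succ).det = pPoly (m+2) := by
    rw [Fin.succAbove_zero, ← pPoly_of (m+2) 1 (m := m) (by omega) (by omega)]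
    congr 1
  have m1 : (B.submatrix (Fin.succAbove 1) Fin.succ).det
      = -(pPoly (m+1)) + C Complex.I := by
    rw [← detN m]
    congr 1
    refine Matrix.ext fun i j => ?_
    simp only [Matrix.submatrix_apply, Matrix.of_apply, Fin.succAbove_zero, Fin.val_succ, hB]
    rw [val_succAbove, Fin.val_one]
  have ml : (B.submatrix (Fin.succAbove (Fin.last (m+2))) Fin.succ).det
      = (-1)^(m+2) + (-1)^(m+1) * C Complex.I * pPoly (m+1) := by
    rw [Fin.succAbove_last, ← detP m]
    congr 1
  rw [hcol 0, hcol 1, hcol (Fin.last (m+2)), e0, e1, el, m0, m1, ml,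
    Fin.val_zero, Fin.val_one, Fin.val_last]
  have expand : (-1 : Polynomial ℂ)^(m+2) * (-(C Complex.I))
      * ((-1)^(m+2) + (-1)^(m+1) * C Complex.I * pPoly (m+1))
      = -(C Complex.I) - pPoly (m+1) := by
    have h1 : (-1 : Polynomial ℂ)^(m+2) * (-1)^(m+2) = 1 := by
      rw [← pow_add]
      exact Even.neg_one_pow ⟨m+2, by ring⟩
    have h2 : (-1 : Polynomial ℂ)^(m+2) * (-1)^(m+1) = -1 := by
      rw [← pow_add]
      exact Odd.neg_one_pow ⟨m+1, by ring⟩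
    have hI : (C Complex.I) * C Complex.I = -1 := by
      rw [← map_mul, Complex.I_mul_I, map_neg, map_one]
    linear_combination (-(C Complex.I)) * h1 + pPoly (m+1) * h2
      + (-((-1 : Polynomial ℂ)^(m+2) * (-1)^(m+1) * pPoly (m+1))) * hI
  rw [expand]
  ring

lemma detM1 (m : ℕ) :
    (Matrix.of fun i j : Fin (m+3) => cpF (m+4) (i:ℕ) ((j:ℕ)+1)).det
      = (-1)^(m+3) * pPoly (m+2) := by
  set M1 := (Matrix.of fun i j : Fin (m+3) => cpF (m+4) (i:ℕ) ((j:ℕ)+1)) with hM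
  have hcol : ∀ i : Fin (m+3), M1 i (Fin.last (m+2)) = cpF (m+4) (i:ℕ) (m+3) := by
    intro i
    simp [hM, Fin.val_last]
  rw [Matrix.det_succ_column _ (Fin.last (m+2))]
  rw [Finset.sum_eq_single 0
    (by
      intro x _ hx0
      have h1 : (x:ℕ) ≠ 0 := fun h => hx0 (Fin.ext h)
      have := x.isLt
      have hz : cpF (m+4) (x:ℕ) (m+3) = 0 := by
        unfold cpF
        rw [if_neg (by omega), if_neg (by omega), if_neg (by omega), if_neg (by omega)]
      rw [hcol x, hz, mul_zero, zero_mul])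
    (by
      intro h
      exact absurd (Finset.mem_univ _) h)]
  have e0 : cpF (m+4) (((0 : Fin (m+3)):ℕ)) (m+3) = -1 := by
    rw [Fin.val_zero]
    unfold cpF
    rw [if_neg (by omega), if_pos (by omega)]
  have m0 : (M1.submatrix (Fin.succAbove 0) (Fin.succAbove (Fin.last (m+2)))).det
      = pPoly (m+2) := by
    rw [Fin.succAbove_zero, Fin.succAbove_last,
      ← pPoly_of (m+2) 1 (m := m) (by omega) (by omega)]
    congr 1
  rw [hcol 0, e0, m0, Fin.val_zero, Fin.val_last, zero_add]
  ring

lemma detA (m : ℕ) :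
    (Matrix.of fun i j : Fin (m+4) => cpF (m+4) (i:ℕ) (j:ℕ)).det
      = X * (X * pPoly (m+2) - 2 * pPoly (m+1)) - pPoly (m+2) := by
  set A := (Matrix.of fun i j : Fin (m+4) => cpF (m+4) (i:ℕ) (j:ℕ)) with hA
  have hrow : ∀ j : Fin (m+4), A (Fin.last (m+3)) j = cpF (m+4) (m+3) (j:ℕ) := by
    intro j
    simp [hA, Fin.val_last]
  rw [Matrix.det_succ_row _ (Fin.last (m+3))]
  rw [sum_two _ 0 (Fin.last (m+3))
    (by
      intro h
      have := congrArg Fin.val h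
      simp [Fin.val_last] at this)
    (by
      intro x hx0 hxl
      have h1 : (x:ℕ) ≠ 0 := fun h => hx0 (Fin.ext h)
      have h2 : (x:ℕ) ≠ m+3 := fun h => hxl (Fin.ext (by rw [h, Fin.val_last]))
      have := x.isLt
      have hz : cpF (m+4) (m+3) (x:ℕ) = 0 := by
        unfold cpF
        rw [if_neg (by omega), if_neg (by omega), if_neg (by omega), if_neg (by omega)]
      rw [hrow x, hz, mul_zero, zero_mul])]
  have e0 : cpF (m+4) (m+3) (((0 : Fin (m+4)):ℕ)) = -1 := by
    rw [Fin.val_zero]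
    unfold cpF
    rw [if_neg (by omega), if_pos (by omega)]
  have el : cpF (m+4) (m+3) (((Fin.last (m+3)):ℕ)) = X := by
    rw [Fin.val_last]
    unfold cpF
    rw [if_pos rfl]
  have m0 : ((A.submatrix (Fin.succAbove (Fin.last (m+3))) (Fin.succAbove 0)).det)
      = (-1)^(m+3) * pPoly (m+2) := by
    rw [Fin.succAbove_last, Fin.succAbove_zero, ← detM1 m]
    congr 1
  have ml : ((A.submatrix (Fin.succAbove (Fin.last (m+3)))
      (Fin.succAbove (Fin.last (m+3)))).det) = X * pPoly (m+2) - 2 * pPoly (m+1) := by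
    rw [Fin.succAbove_last, ← detB m]
    congr 1
  rw [hrow 0, hrow (Fin.last (m+3)), e0, el, m0, ml, Fin.val_zero, Fin.val_last]
  have h1 : (-1 : Polynomial ℂ)^(m+3+0) * -1 * ((-1)^(m+3) * pPoly (m+2))
      = -(pPoly (m+2)) := by
    rw [add_zero]
    have : (-1 : Polynomial ℂ)^(m+3) * (-1)^(m+3) = 1 := by
      rw [← pow_add]
      exact Even.neg_one_pow ⟨m+3, by ring⟩
    linear_combination (-(pPoly (m+2))) * this
  have h2 : (-1 : Polynomial ℂ)^(m+3+(m+3)) = 1 := Even.neg_one_pow ⟨m+3, by ring⟩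
  rw [h1, h2]
  ring

/-- charpoly identity for `C'_{n-1,n}`. -/
theorem stmt5 (n : ℕ) (hn : 4 ≤ n) :
    (CpPend n).charpoly = X * (X * pPoly (n - 2) - 2 * pPoly (n - 3)) - pPoly (n - 2) := by
  obtain ⟨m, rfl⟩ : ∃ m, n = m + 4 := ⟨n - 4, by omega⟩
  have h1 : (CpPend (m+4)).charpoly = (Matrix.charmatrix (CpPend (m+4))).det := rfl
  rw [h1, charm_cp _ hn, show m+4-2 = m+2 from rfl, show m+4-3 = m+1 from rfl]
  exact detA m

end AuxSect
end

section
/- The spectral radii of the imaginary cycles C'_n converge to 2 as n → ∞: lim_{n→∞} ρ(C'_n) = 2. -/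
open Polynomial Filter

lemma gersh {V : Type*} [Fintype V] [DecidableEq V] (M : Matrix V V ℂ) (C : ℝ)
    (h : ∀ i, ∑ j, ‖M i j‖ ≤ C) :
    ∀ μ ∈ spectrum ℂ M, ‖μ‖ ≤ C := by
  intro μ hμ
  rw [spectrum.mem_iff] at hμ
  have hdet : (algebraMap ℂ (Matrix V V ℂ) μ - M).det = 0 := by
    by_contra h0
    exact hμ ((Matrix.isUnit_iff_isUnit_det _).2 (isUnit_iff_ne_zero.2 h0))
  obtain ⟨v, hv0, hv⟩ := (Matrix.exists_mulVec_eq_zero_iff).2 hdet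
  have hMv : M.mulVec v = μ • v := by
    rw [Matrix.sub_mulVec] at hv
    have h1 : (algebraMap ℂ (Matrix V V ℂ) μ).mulVec v = μ • v := by
      rw [Algebra.algebraMap_eq_smul_one, Matrix.smul_mulVec, Matrix.one_mulVec]
    rw [h1, sub_eq_zero] at hv
    exact hv.symm
  obtain ⟨i0, hi0⟩ := Function.ne_iff.1 hv0
  obtain ⟨i, -, hi⟩ := Finset.exists_max_image Finset.univ (fun i => ‖v i‖)
    ⟨i0, Finset.mem_univ _⟩
  have hvi : 0 < ‖v i‖ := by
    have : 0 < ‖v i0‖ := by simpa using hi0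
    exact lt_of_lt_of_le this (hi i0 (Finset.mem_univ _))
  have key : ‖μ‖ * ‖v i‖ ≤ C * ‖v i‖ := by
    calc ‖μ‖ * ‖v i‖ = ‖(M.mulVec v) i‖ := by
          rw [hMv]; simp [map_mul]
      _ = ‖∑ j, M i j * v j‖ := by
          simp [Matrix.mulVec, dotProduct]
      _ ≤ ∑ j, ‖M i j * v j‖ := norm_sum_le _ _
      _ = ∑ j, ‖M i j‖ * ‖v j‖ := by simp [map_mul]
      _ ≤ ∑ j, ‖M i j‖ * ‖v i‖ := by
          refine Finset.sum_le_sum fun j _ => ?_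
          exact mul_le_mul_of_nonneg_left (hi j (Finset.mem_univ _)) (norm_nonneg _)
      _ = (∑ j, ‖M i j‖) * ‖v i‖ := by rw [Finset.sum_mul]
      _ ≤ C * ‖v i‖ := mul_le_mul_of_nonneg_right (h i) (norm_nonneg _)
  exact le_of_mul_le_mul_right key hvi

lemma rowsum (n : ℕ) [NeZero n] (i : ZMod n) : ∑ l, ‖CpCycle n i l‖ ≤ 2 := by
  have step : ∀ l : ZMod n, ‖CpCycle n i l‖
      ≤ (if l = i + 1 then (1:ℝ) else 0) + (if l = i - 1 then 1 else 0) := by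
    intro l
    have e2 : (i = l + 1) = (l = i - 1) :=
      propext ⟨fun h => by rw [h]; ring, fun h => by rw [h]; ring⟩
    simp only [CpCycle, Matrix.of_apply, e2]
    refine le_trans (norm_add_le _ _) (add_le_add ?_ ?_) <;>
      split_ifs <;> simp
  calc ∑ l, ‖CpCycle n i l‖
      ≤ ∑ l : ZMod n, ((if l = i + 1 then (1:ℝ) else 0) + (if l = i - 1 then 1 else 0)) :=
        Finset.sum_le_sum fun l _ => step l
    _ = 2 := by
        rw [Finset.sum_add_distrib, Finset.sum_ite_eq' Finset.univ (i+1) (fun _ => (1:ℝ)),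
          Finset.sum_ite_eq' Finset.univ (i-1) (fun _ => (1:ℝ))]
        norm_num

lemma cp_expand (n : ℕ) [NeZero n] (x : ZMod n → ℂ) (j : ZMod n) :
    (CpCycle n).mulVec x j
      = (if j = -1 then Complex.I else 1) * x (j + 1)
        + (if j - 1 = -1 then -Complex.I else 1) * x (j - 1) := by
  have e2 : ∀ l : ZMod n, (j = l + 1) = (l = j - 1) := fun l =>
    propext ⟨fun h => by rw [h]; ring, fun h => by rw [h]; ring⟩
  simp only [Matrix.mulVec, dotProduct, CpCycle, Matrix.of_apply, add_mul, ite_mul,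
    zero_mul, e2]
  rw [Finset.sum_add_distrib,
    Finset.sum_ite_eq' Finset.univ (j+1)
      (fun l => if j = -1 then Complex.I * x l else 1 * x l),
    Finset.sum_ite_eq' Finset.univ (j-1)
      (fun l => if l = -1 then -Complex.I * x l else 1 * x l)]
  simp only [Finset.mem_univ, if_true]
-- val facts
lemma cast_sub_one (n : ℕ) (hn : 3 ≤ n) : ((n - 1 : ℕ) : ZMod n) = -1 := by
  have h1 : (1:ℕ) ≤ n := by omega
  push_cast [Nat.cast_sub h1]
  rw [ZMod.natCast_self]; ring

lemma val_neg_one' (n : ℕ) (hn : 3 ≤ n) : (-1 : ZMod n).val = n - 1 := by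
  haveI : NeZero n := ⟨by omega⟩
  rw [← cast_sub_one n hn, ZMod.val_cast_of_lt (by omega)]

lemma cast_sub_two (n : ℕ) (hn : 3 ≤ n) : ((n - 2 : ℕ) : ZMod n) = -1 - 1 := by
  have h2 : (2:ℕ) ≤ n := by omega
  push_cast [Nat.cast_sub h2]
  rw [ZMod.natCast_self]; ring

lemma val_neg_two (n : ℕ) (hn : 3 ≤ n) : (-1 - 1 : ZMod n).val = n - 2 := by
  haveI : NeZero n := ⟨by omega⟩
  rw [← cast_sub_two n hn, ZMod.val_cast_of_lt (by omega)]

lemma val_ne_iff (n : ℕ) (hn : 3 ≤ n) (j : ZMod n) (h : j ≠ -1) : j.val ≠ n - 1 := by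
  haveI : NeZero n := ⟨by omega⟩
  intro hv
  apply h
  have := ZMod.natCast_rightInverse (n := n) j
  rw [← this, hv, cast_sub_one n hn]

lemma val_add_one (n : ℕ) (hn : 3 ≤ n) (j : ZMod n) (h : j ≠ -1) :
    (j + 1).val = j.val + 1 := by
  haveI : NeZero n := ⟨by omega⟩
  haveI : Fact (1 < n) := ⟨by omega⟩
  have hlt : j.val < n := ZMod.val_lt j
  have hne := val_ne_iff n hn j h
  rw [ZMod.val_add, ZMod.val_one, Nat.mod_eq_of_lt (by omega)]

lemma val_sub_one (n : ℕ) (hn : 3 ≤ n) (j : ZMod n) (h : j ≠ 0) :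
    (j - 1).val = j.val - 1 := by
  haveI : NeZero n := ⟨by omega⟩
  have hlt : j.val < n := ZMod.val_lt j
  have hne : j.val ≠ 0 := by
    intro hv
    apply h
    have := ZMod.natCast_rightInverse (n := n) j
    rw [← this, hv, Nat.cast_zero]
  have : j - 1 = j + (-1) := by ring
  rw [this, ZMod.val_add, val_neg_one' n hn]
  have : (j.val + (n - 1)) = (j.val - 1) + n := by omega
  rw [this, Nat.add_mod_right, Nat.mod_eq_of_lt (by omega)]

noncomputable def evec (n : ℕ) [NeZero n] (j : ZMod n) : ℂ :=
  Complex.exp (((Real.pi / (2 * n) * j.val : ℝ) : ℂ) * Complex.I)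

lemma key_exp (a b : ℝ) :
    Complex.exp ((a : ℂ) * Complex.I) * Complex.exp ((b : ℂ) * Complex.I)
      = Complex.exp (((a + b : ℝ) : ℂ) * Complex.I) := by
  rw [← Complex.exp_add]; push_cast; ring_nf

lemma exp_pi_half : Complex.exp (((Real.pi / 2 : ℝ) : ℂ) * Complex.I) = Complex.I := by
  rw [Complex.exp_mul_I, ← Complex.ofReal_cos, ← Complex.ofReal_sin,
    Real.cos_pi_div_two, Real.sin_pi_div_two]
  simp

lemma eig (n : ℕ) (hn : 3 ≤ n) [NeZero n] :
    (CpCycle n).mulVec (evec n)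
      = ((2 * Real.cos (Real.pi / (2 * n)) : ℝ) : ℂ) • evec n := by
  haveI : Fact (1 < n) := ⟨by omega⟩
  set θ : ℝ := Real.pi / (2 * n) with hθ
  have hn0 : (n : ℝ) ≠ 0 := by positivity
  have hr : θ * (n : ℝ) = Real.pi / 2 := by rw [hθ]; field_simp
  have hcos : ((2 * Real.cos θ : ℝ) : ℂ)
      = Complex.exp ((θ:ℂ) * Complex.I) + Complex.exp (-(θ:ℂ) * Complex.I) := by
    push_cast [Complex.ofReal_cos]
    rw [Complex.cos]
    ring
  funext j
  rw [cp_expand, Pi.smul_apply, smul_eq_mul, hcos]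
  by_cases hj1 : j = -1
  · subst hj1
    have hc2 : ((-1:ZMod n) - 1) ≠ -1 := by
      intro h
      have := congrArg ZMod.val h
      rw [val_neg_two n hn, val_neg_one' n hn] at this
      omega
    rw [if_pos rfl, if_neg hc2]
    have h01 : (-1 : ZMod n) + 1 = 0 := by ring
    rw [h01]
    simp only [evec, val_neg_two n hn, val_neg_one' n hn, ZMod.val_zero]
    push_cast [Nat.cast_sub (show (1:ℕ) ≤ n by omega), Nat.cast_sub (show (2:ℕ) ≤ n by omega)]
    simp only [hθ]
    push_cast
    set c : ℂ := (Real.pi : ℂ) / (2 * (n:ℂ)) with hc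
    have hnc : (n:ℂ) ≠ 0 := Nat.cast_ne_zero.2 (by omega)
    have hexpn : Complex.exp (c * (n:ℂ) * Complex.I) = Complex.I := by
      rw [show c * (n:ℂ) * Complex.I = ((Real.pi/2 : ℝ):ℂ) * Complex.I by
        rw [hc]; push_cast; field_simp]
      exact exp_pi_half
    have h1 : Complex.exp (c * Complex.I) * Complex.exp (c * ((n:ℂ) - 1) * Complex.I)
        = Complex.exp (c * (n:ℂ) * Complex.I) := by
      rw [← Complex.exp_add]; congr 1; ring
    have h2 : Complex.exp (-c * Complex.I) * Complex.exp (c * ((n:ℂ) - 1) * Complex.I)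
        = Complex.exp (c * ((n:ℂ) - 2) * Complex.I) := by
      rw [← Complex.exp_add]; congr 1; ring
    have h0 : Complex.exp (c * 0 * Complex.I) = 1 := by
      rw [mul_zero, zero_mul, Complex.exp_zero]
    linear_combination Complex.I * h0 - h2 - h1 - hexpn
  · by_cases hj0 : j = 0
    · subst hj0
      have hc1 : (0:ZMod n) ≠ -1 := by
        intro h
        have := congrArg ZMod.val h
        rw [val_neg_one' n hn, ZMod.val_zero] at this
        omega
      have hc2 : (0:ZMod n) - 1 = -1 := by ring
      rw [if_neg hc1, if_pos hc2, hc2]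
      have h1 : (0:ZMod n) + 1 = 1 := by ring
      rw [h1]
      simp only [evec, val_neg_one' n hn, ZMod.val_zero, ZMod.val_one]
      push_cast [Nat.cast_sub (show (1:ℕ) ≤ n by omega)]
      simp only [hθ]
      push_cast
      set c : ℂ := (Real.pi : ℂ) / (2 * (n:ℂ)) with hc
      have hnc : (n:ℂ) ≠ 0 := Nat.cast_ne_zero.2 (by omega)
      have hexpn : Complex.exp (c * (n:ℂ) * Complex.I) = Complex.I := by
        rw [show c * (n:ℂ) * Complex.I = ((Real.pi/2 : ℝ):ℂ) * Complex.I by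
          rw [hc]; push_cast; field_simp]
        exact exp_pi_half
      have h1 : Complex.exp (-c * Complex.I) * Complex.exp (c * (n:ℂ) * Complex.I)
          = Complex.exp (c * ((n:ℂ) - 1) * Complex.I) := by
        rw [← Complex.exp_add]; congr 1; ring
      have h0 : Complex.exp (c * 0 * Complex.I) = 1 := by
        rw [mul_zero, zero_mul, Complex.exp_zero]
      have hII : Complex.I * Complex.I = -1 := Complex.I_mul_I
      have he1 : Complex.exp (c * 1 * Complex.I) = Complex.exp (c * Complex.I) := by norm_num
      rw [he1, h0, mul_one, one_mul, ← h1, hexpn]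
      linear_combination -Complex.exp (-c * Complex.I) * hII
    · have hc2 : j - 1 ≠ -1 := fun h => hj0 (by linear_combination h)
      rw [if_neg hj1, if_neg hc2]
      have hv1 : 1 ≤ j.val := by
        rcases Nat.eq_zero_or_pos j.val with h | h
        · exact absurd ((ZMod.val_eq_zero j).1 h) hj0
        · exact h
      simp only [evec, val_add_one n hn j hj1, val_sub_one n hn j hj0]
      push_cast [Nat.cast_sub hv1]
      simp only [hθ]
      push_cast
      set c : ℂ := (Real.pi : ℂ) / (2 * (n:ℂ)) with hc
      set v : ℂ := (j.val : ℂ) with hv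
      have h1 : Complex.exp (c * Complex.I) * Complex.exp (c * v * Complex.I)
          = Complex.exp (c * (v + 1) * Complex.I) := by
        rw [← Complex.exp_add]; congr 1; ring
      have h2 : Complex.exp (-c * Complex.I) * Complex.exp (c * v * Complex.I)
          = Complex.exp (c * (v - 1) * Complex.I) := by
        rw [← Complex.exp_add]; congr 1; ring
      linear_combination -h1 - h2

lemma mem_spec (n : ℕ) (hn : 3 ≤ n) [NeZero n] :
    ((2 * Real.cos (Real.pi / (2 * n)) : ℝ) : ℂ) ∈ spectrum ℂ (CpCycle n) := by
  rw [spectrum.mem_iff]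
  intro hU
  set μ : ℂ := ((2 * Real.cos (Real.pi / (2 * n)) : ℝ) : ℂ)
  have hdet : (algebraMap ℂ (Matrix (ZMod n) (ZMod n) ℂ) μ - CpCycle n).det = 0 := by
    rw [← Matrix.exists_mulVec_eq_zero_iff]
    refine ⟨evec n, ?_, ?_⟩
    · intro h
      have := congrFun h 0
      exact Complex.exp_ne_zero _ this
    · rw [Matrix.sub_mulVec, Algebra.algebraMap_eq_smul_one, Matrix.smul_mulVec,
        Matrix.one_mulVec, eig n hn, sub_self]
  exact (isUnit_iff_ne_zero.1 ((Matrix.isUnit_iff_isUnit_det _).1 hU)) hdet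

lemma specRad_le (n : ℕ) (hn : 3 ≤ n) [NeZero n] : specRad (CpCycle n) ≤ 2 := by
  refine Real.sSup_le ?_ (by norm_num)
  rintro y ⟨z, hz, rfl⟩
  exact gersh _ 2 (rowsum n) z hz

lemma le_specRad (n : ℕ) (hn : 3 ≤ n) [NeZero n] :
    2 * Real.cos (Real.pi / (2 * n)) ≤ specRad (CpCycle n) := by
  have hnn : 0 ≤ 2 * Real.cos (Real.pi / (2 * n)) := by
    have h1 : 0 ≤ Real.pi / (2 * n) := by positivity
    have h2 : Real.pi / (2 * n) ≤ Real.pi / 2 := by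
      apply div_le_div_of_nonneg_left Real.pi_pos.le (by norm_num)
      have : (3:ℝ) ≤ n := by exact_mod_cast hn
      linarith
    have := Real.cos_nonneg_of_mem_Icc ⟨by linarith [Real.pi_pos], h2⟩
    linarith
  have hmem : 2 * Real.cos (Real.pi / (2 * n))
      ∈ (fun z => ‖z‖) '' spectrum ℂ (CpCycle n) := by
    refine ⟨_, mem_spec n hn, ?_⟩
    simp only [Complex.norm_real, Real.norm_eq_abs]
    rw [abs_of_nonneg hnn]
  refine le_csSup ⟨2, ?_⟩ hmem
  rintro y ⟨z, hz, rfl⟩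
  exact gersh _ 2 (rowsum n) z hz


/-- `ρ(C'_n) → 2` (here `n = k + 3 ≥ 3`). -/
theorem stmt15 :
    Tendsto (fun k : ℕ => specRad (CpCycle (k + 3))) atTop (nhds 2) := by
  have hlo : ∀ k : ℕ, 2 * Real.cos (Real.pi / (2 * ((k:ℝ) + 3))) ≤ specRad (CpCycle (k + 3)) := by
    intro k
    have := le_specRad (k + 3) (by omega)
    push_cast at this
    exact this
  have hhi : ∀ k : ℕ, specRad (CpCycle (k + 3)) ≤ 2 := fun k => specRad_le (k + 3) (by omega)
  have htend : Tendsto (fun k : ℕ => 2 * Real.cos (Real.pi / (2 * ((k:ℝ) + 3)))) atTop (nhds 2) := by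
    have h1 : Tendsto (fun k : ℕ => 2 * ((k:ℝ) + 3)) atTop atTop := by
      apply Tendsto.const_mul_atTop (by norm_num : (0:ℝ) < 2)
      exact tendsto_atTop_add_const_right _ _ tendsto_natCast_atTop_atTop
    have h2 : Tendsto (fun k : ℕ => Real.pi / (2 * ((k:ℝ) + 3))) atTop (nhds 0) :=
      h1.const_div_atTop _
    have h3 := (Real.continuous_cos.tendsto 0).comp h2
    rw [Real.cos_zero] at h3
    have h4 := h3.const_mul (2:ℝ)
    simp only [Function.comp] at h4
    simpa using h4
  exact tendsto_of_tendsto_of_tendsto_of_le_of_le htend tendsto_const_nhds hlo hhi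
end
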